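/- arXiv:1612.04740 — 3 statements merged into one kernel-verified Lean document; each statement's English description precedes it below -/
import Mathlib

section
/- Let μ* ∈ H^n be non-constant with true segmentation τ* whose segments are λ*_1,…,λ*_{D_{τ*}}, and denote by μ*_{λ*_i} the common value of μ* on λ*_i. Then for any segmentation τ ∈ T_n with D_τ < D_{τ*}: ‖μ* − Π_τ μ*‖² ≥ min_{1≤i≤D_{τ*}−1} { (|λ*_i| · |λ*_{i+1}|) / (|λ*_i| + |λ*_{i+1}|) · ‖μ*_{λ*_{i+1}} − μ*_{λ*_i}‖_H² }. -/
open MeasureTheory ProbabilityTheory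

/-- A segmentation of `{1, …, n}` with `D` segments: integers
`0 = t 0 < t 1 < ⋯ < t D = n`. -/
structure Seg (n : ℕ) where
  D : ℕ
  t : ℕ → ℕ
  hD : 0 < D
  h0 : t 0 = 0
  hn : t D = n
  hmono : ∀ ℓ < D, t ℓ < t (ℓ + 1)

namespace Seg

variable {n : ℕ}

/-- The `ℓ`-th segment (`0`-based) of a segmentation, as a set of `0`-based indices:
it corresponds to the paper's segment `λ_{ℓ+1} = {t ℓ + 1, …, t (ℓ+1)}` (1-based). -/
def seg (τ : Seg n) (ℓ : ℕ) : Finset (Fin n) :=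
  Finset.univ.filter fun j => τ.t ℓ ≤ (j : ℕ) ∧ (j : ℕ) < τ.t (ℓ + 1)

/-- `Λ̲_τ`: normalized size of the smallest segment. -/
noncomputable def lamMin (τ : Seg n) : ℝ :=
  (((Finset.range τ.D).inf' (Finset.nonempty_range_iff.mpr τ.hD.ne')
      fun ℓ => τ.t (ℓ + 1) - τ.t ℓ : ℕ) : ℝ) / n

/-- `Λ̄_τ`: normalized size of the largest segment. -/
noncomputable def lamMax (τ : Seg n) : ℝ :=
  (((Finset.range τ.D).sup' (Finset.nonempty_range_iff.mpr τ.hD.ne')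
      fun ℓ => τ.t (ℓ + 1) - τ.t ℓ : ℕ) : ℝ) / n

/-- `d∞^{(1)}(τ¹,τ²) = max_{1 ≤ i ≤ D₁−1} min_{1 ≤ j ≤ D₂−1} |τ¹_i − τ²_j|`
(with natural conventions in the degenerate cases where a segmentation has no
interior change-point). -/
noncomputable def dinf1 (τ1 τ2 : Seg n) : ℕ :=
  if h : 2 ≤ τ1.D ∧ 2 ≤ τ2.D then
    (Finset.Ioo 0 τ1.D).sup fun i =>
      (Finset.Ioo 0 τ2.D).inf' ⟨1, Finset.mem_Ioo.mpr ⟨Nat.one_pos, by omega⟩⟩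
        fun j => Nat.dist (τ1.t i) (τ2.t j)
  else if τ1.D = τ2.D then 0 else n

/-- `d∞^{(2)}(τ¹,τ²) = max_{1 ≤ i ≤ D₁−1} min_{0 ≤ j ≤ D₂} |τ¹_i − τ²_j|`. -/
noncomputable def dinf2 (τ1 τ2 : Seg n) : ℕ :=
  (Finset.Ioo 0 τ1.D).sup fun i =>
    (Finset.Icc 0 τ2.D).inf' ⟨0, Finset.mem_Icc.mpr ⟨le_rfl, Nat.zero_le _⟩⟩
      fun j => Nat.dist (τ1.t i) (τ2.t j)

/-- `d∞^{(3)}(τ¹,τ²) = max_{1 ≤ i ≤ D₁−1} |τ¹_i − τ²_i|` (meaningful when `D₁ = D₂`). -/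
noncomputable def dinf3 (τ1 τ2 : Seg n) : ℕ :=
  (Finset.Ioo 0 τ1.D).sup fun i => Nat.dist (τ1.t i) (τ2.t i)

/-- `d_H^{(1)}`. -/
noncomputable def dH1 (τ1 τ2 : Seg n) : ℕ := max (dinf1 τ1 τ2) (dinf1 τ2 τ1)

/-- `d_H^{(2)}`. -/
noncomputable def dH2 (τ1 τ2 : Seg n) : ℕ := max (dinf2 τ1 τ2) (dinf2 τ2 τ1)

/-- The matrix of the orthogonal projection `Π_τ`:
`(Π_τ)_{ij} = 1/|λ|` if `i, j` are in the same segment `λ` of `τ`, and `0` otherwise. -/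
noncomputable def Pmat (τ : Seg n) : Fin n → Fin n → ℝ := fun i j =>
  ∑ ℓ ∈ Finset.range τ.D, if i ∈ τ.seg ℓ ∧ j ∈ τ.seg ℓ then ((τ.seg ℓ).card : ℝ)⁻¹ else 0

/-- The Frobenius loss `d_F(τ¹,τ²) = ‖Π_{τ¹} − Π_{τ²}‖_F`. -/
noncomputable def dF (τ1 τ2 : Seg n) : ℝ :=
  Real.sqrt (∑ i, ∑ j, (Pmat τ1 i j - Pmat τ2 i j) ^ 2)

/-- The orthogonal projection `Π_τ : H^n → H^n` onto vectors constant on each segment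
of `τ`: `(Π_τ x)_i` is the average of `x` over the segment of `τ` containing `i`. -/
noncomputable def proj {H : Type*} [AddCommGroup H] [Module ℝ H]
    (τ : Seg n) (x : Fin n → H) : Fin n → H := fun i =>
  ∑ ℓ ∈ Finset.range τ.D,
    if τ.t ℓ ≤ (i : ℕ) ∧ (i : ℕ) < τ.t (ℓ + 1)
    then (((τ.t (ℓ + 1) - τ.t ℓ : ℕ) : ℝ))⁻¹ • ∑ j ∈ τ.seg ℓ, x j
    else 0

end Seg

/-- Squared norm on `H^n`: `‖x‖² = Σ_i ‖x_i‖²`. -/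
noncomputable def hnorm2 {n : ℕ} {H : Type*} [NormedAddCommGroup H] (x : Fin n → H) : ℝ :=
  ∑ i, ‖x i‖ ^ 2

/-- Inner product on `H^n`: `⟨x, y⟩ = Σ_i ⟨x_i, y_i⟩_H`. -/
noncomputable def hinner {n : ℕ} {H : Type*} [NormedAddCommGroup H] [InnerProductSpace ℝ H]
    (x y : Fin n → H) : ℝ := ∑ i, inner ℝ (x i) (y i)

/-- `τ` is the true segmentation of `m ∈ H^n`: `m` is constant on every segment of `τ`
and jumps at every interior change-point of `τ`. -/
def IsTrueSeg {n : ℕ} {H : Type*} (τ : Seg n) (m : Fin n → H) : Prop :=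
  (∀ ℓ < τ.D, ∀ i ∈ τ.seg ℓ, ∀ j ∈ τ.seg ℓ, m i = m j) ∧
  ∀ ℓ, 0 < ℓ → ℓ < τ.D → ∀ (h1 : τ.t ℓ - 1 < n) (h2 : τ.t ℓ < n),
    m ⟨τ.t ℓ - 1, h1⟩ ≠ m ⟨τ.t ℓ, h2⟩

/-- The size `‖μ*_{t ℓ + 1} − μ*_{t ℓ}‖` (paper indexing) of the jump of `m` at
the change-point `t ℓ` of `τ`. -/
noncomputable def jumpAt {n : ℕ} {H : Type*} [NormedAddCommGroup H]
    (τ : Seg n) (m : Fin n → H) (ℓ : ℕ) : ℝ :=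
  if h : 0 < τ.t ℓ ∧ τ.t ℓ < n then ‖m ⟨τ.t ℓ, h.2⟩ - m ⟨τ.t ℓ - 1, by omega⟩‖ else 0

/-- `Δ̲`: size of the smallest jump of `m` (over the change-points of `τ`). -/
noncomputable def deltaMin {n : ℕ} {H : Type*} [NormedAddCommGroup H]
    (τ : Seg n) (m : Fin n → H) : ℝ :=
  if h : 2 ≤ τ.D then
    (Finset.Ioo 0 τ.D).inf' ⟨1, Finset.mem_Ioo.mpr ⟨Nat.one_pos, by omega⟩⟩ (jumpAt τ m)
  else 0

/-- `Δ̄`: size of the largest jump of `m` (over the change-points of `τ`). -/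
noncomputable def deltaMax {n : ℕ} {H : Type*} [NormedAddCommGroup H]
    (τ : Seg n) (m : Fin n → H) : ℝ :=
  if h : 2 ≤ τ.D then
    (Finset.Ioo 0 τ.D).sup' ⟨1, Finset.mem_Ioo.mpr ⟨Nat.one_pos, by omega⟩⟩ (jumpAt τ m)
  else 0

/-- The value of `m` at the first index of the `ℓ`-th segment of `τ`; if `m` is constant
on each segment of `τ`, this is the common value `μ*_{λ_ℓ}` of `m` on that segment. -/
noncomputable def segVal {n : ℕ} {H : Type*} [AddCommGroup H]
    (τ : Seg n) (m : Fin n → H) (ℓ : ℕ) : H :=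
  if h : τ.t ℓ < n then m ⟨τ.t ℓ, h⟩ else 0

/-- `M_n = max_{1 ≤ k ≤ n} ‖ε_1 + ⋯ + ε_k‖` (the value at `k = 0` is `0`, which does not
affect the maximum). -/
noncomputable def Mmax {n : ℕ} {H : Type*} [NormedAddCommGroup H] (ε : Fin n → H) : ℝ :=
  (Finset.range (n + 1)).sup' (Finset.nonempty_range_iff.mpr (Nat.succ_ne_zero n))
    fun k => ‖∑ j ∈ Finset.univ.filter (fun j : Fin n => (j : ℕ) < k), ε j‖


namespace CPAux


variable {H : Type*} [NormedAddCommGroup H] [InnerProductSpace ℝ H]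

noncomputable def avg (f : ℕ → H) (s e : ℕ) : H :=
  (((e - s : ℕ) : ℝ))⁻¹ • ∑ k ∈ Finset.Ico s e, f k

noncomputable def cost (f : ℕ → H) (s e : ℕ) : ℝ :=
  ∑ k ∈ Finset.Ico s e, ‖f k - avg f s e‖ ^ 2

lemma cost_nonneg (f : ℕ → H) (s e : ℕ) : 0 ≤ cost f s e :=
  Finset.sum_nonneg fun _ _ => by positivity

lemma cost_le (f : ℕ → H) (s e : ℕ) (c : H) :
    cost f s e ≤ ∑ k ∈ Finset.Ico s e, ‖f k - c‖ ^ 2 := by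
  rcases le_or_gt e s with h | h
  · rw [Finset.Ico_eq_empty (by omega)]
    simp [cost, Finset.Ico_eq_empty (by omega : ¬ s < e)]
  · set a := avg f s e with ha
    have hN : (0:ℝ) < ((e - s : ℕ) : ℝ) := by
      have : 0 < e - s := by omega
      exact_mod_cast this
    have hsum : ∑ k ∈ Finset.Ico s e, (f k - a) = 0 := by
      rw [Finset.sum_sub_distrib, Finset.sum_const, Nat.card_Ico, ha, avg,
        ← Nat.cast_smul_eq_nsmul ℝ, smul_smul, mul_inv_cancel₀ hN.ne', one_smul, sub_self]
    have key : ∑ k ∈ Finset.Ico s e, ‖f k - c‖ ^ 2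
        = cost f s e + ((e - s : ℕ) : ℝ) * ‖a - c‖ ^ 2 := by
      have : ∀ k, ‖f k - c‖ ^ 2
          = ‖f k - a‖ ^ 2 + (2 * inner ℝ (f k - a) (a - c) + ‖a - c‖ ^ 2) := by
        intro k
        have : f k - c = (f k - a) + (a - c) := by abel
        rw [this, norm_add_sq_real]; ring
      simp_rw [this]
      rw [Finset.sum_add_distrib, Finset.sum_add_distrib]
      have h1 : ∑ k ∈ Finset.Ico s e, 2 * inner ℝ (f k - a) (a - c) = (0:ℝ) := by
        rw [← Finset.mul_sum, ← sum_inner, hsum, inner_zero_left, mul_zero]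
      rw [h1, Finset.sum_const, Nat.card_Ico, cost]
      push_cast
      ring
    rw [key]
    nlinarith [sq_nonneg ‖a - c‖, hN.le, mul_nonneg hN.le (sq_nonneg ‖a - c‖)]

lemma cost_superadd (f : ℕ → H) {s m e : ℕ} (h1 : s ≤ m) (h2 : m ≤ e) :
    cost f s m + cost f m e ≤ cost f s e := by
  have hsplit : cost f s e
      = ∑ k ∈ Finset.Ico s m, ‖f k - avg f s e‖ ^ 2
        + ∑ k ∈ Finset.Ico m e, ‖f k - avg f s e‖ ^ 2 := by
    rw [cost, ← Finset.sum_Ico_consecutive _ h1 h2]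
  rw [hsplit]
  exact add_le_add (cost_le f s m _) (cost_le f m e _)

lemma cost_clip (f : ℕ → H) (s e M : ℕ) (h : s ≤ e) :
    cost f (min s M) (min e M) ≤ cost f s e := by
  rcases le_or_gt e M with h1 | h1
  · rw [min_eq_left (le_trans h h1), min_eq_left h1]
  rcases le_or_gt s M with h2 | h2
  · rw [min_eq_left h2, min_eq_right h1.le]
    calc cost f s M ≤ cost f s M + cost f M e := le_add_of_nonneg_right (cost_nonneg _ _ _)
      _ ≤ cost f s e := cost_superadd f h2 h1.le
  · rw [min_eq_right h2.le, min_eq_right h1.le]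
    simp [cost, Finset.Ico_self]
    exact cost_nonneg f s e

lemma two_group_scalar {u v α β δ : ℝ} (hu : 0 < u) (hv : 0 < v)
    (hα : 0 ≤ α) (hβ : 0 ≤ β) (hδ : 0 ≤ δ) (h : δ ≤ α + β) :
    u * v / (u + v) * δ ^ 2 ≤ u * α ^ 2 + v * β ^ 2 := by
  have huv : 0 < u + v := by linarith
  rw [div_mul_eq_mul_div, div_le_iff₀ huv]
  have hδ2 : δ ^ 2 ≤ (α + β) ^ 2 := by nlinarith
  nlinarith [sq_nonneg (u * α - v * β), mul_pos hu hv,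
    mul_le_mul_of_nonneg_left hδ2 (mul_pos hu hv).le]

lemma cost_two_group (f : ℕ → H) {s m e : ℕ} (hsm : s < m) (hme : m < e)
    {x y : H} (hx : ∀ k ∈ Finset.Ico s m, f k = x) (hy : ∀ k ∈ Finset.Ico m e, f k = y) :
    ((m - s : ℕ) : ℝ) * ((e - m : ℕ) : ℝ) / (((m - s : ℕ) : ℝ) + ((e - m : ℕ) : ℝ))
      * ‖y - x‖ ^ 2 ≤ cost f s e := by
  set a := avg f s e
  have e1 : ∑ k ∈ Finset.Ico s m, ‖f k - a‖ ^ 2 = ((m - s : ℕ) : ℝ) * ‖x - a‖ ^ 2 := by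
    calc ∑ k ∈ Finset.Ico s m, ‖f k - a‖ ^ 2
        = ∑ _k ∈ Finset.Ico s m, ‖x - a‖ ^ 2 :=
          Finset.sum_congr rfl (fun k hk => by rw [hx k hk])
      _ = ((m - s : ℕ) : ℝ) * ‖x - a‖ ^ 2 := by
          rw [Finset.sum_const, Nat.card_Ico, nsmul_eq_mul]
  have e2 : ∑ k ∈ Finset.Ico m e, ‖f k - a‖ ^ 2 = ((e - m : ℕ) : ℝ) * ‖y - a‖ ^ 2 := by
    calc ∑ k ∈ Finset.Ico m e, ‖f k - a‖ ^ 2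
        = ∑ _k ∈ Finset.Ico m e, ‖y - a‖ ^ 2 :=
          Finset.sum_congr rfl (fun k hk => by rw [hy k hk])
      _ = ((e - m : ℕ) : ℝ) * ‖y - a‖ ^ 2 := by
          rw [Finset.sum_const, Nat.card_Ico, nsmul_eq_mul]
  have hsplit : cost f s e
      = ((m - s : ℕ) : ℝ) * ‖x - a‖ ^ 2 + ((e - m : ℕ) : ℝ) * ‖y - a‖ ^ 2 := by
    rw [cost, ← Finset.sum_Ico_consecutive _ hsm.le hme.le, e1, e2]
  rw [hsplit]
  have hu : (0:ℝ) < ((m - s : ℕ) : ℝ) := by exact_mod_cast Nat.sub_pos_of_lt hsm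
  have hv : (0:ℝ) < ((e - m : ℕ) : ℝ) := by exact_mod_cast Nat.sub_pos_of_lt hme
  have hd : ‖y - x‖ ≤ ‖x - a‖ + ‖y - a‖ := by
    have : y - x = (y - a) - (x - a) := by abel
    rw [this]
    calc ‖(y - a) - (x - a)‖ ≤ ‖y - a‖ + ‖x - a‖ := norm_sub_le _ _
      _ = ‖x - a‖ + ‖y - a‖ := by ring
  exact two_group_scalar hu hv (norm_nonneg _) (norm_nonneg _) (norm_nonneg _) hd



lemma mono_of_step (t : ℕ → ℕ) (D : ℕ) (h : ∀ ℓ < D, t ℓ ≤ t (ℓ + 1)) :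
    ∀ i j, i ≤ j → j ≤ D → t i ≤ t j := by
  intro i j hij hjD
  induction j with
  | zero => rw [Nat.le_zero.mp hij]
  | succ k IHk =>
    rcases Nat.eq_or_lt_of_le hij with rfl | hlt
    · exact le_rfl
    · exact le_trans (IHk (by omega) (by omega)) (h k (by omega))

lemma min_split_scalar {s p' u q J1 J2 : ℝ} (hs : 0 < s) (hp' : 0 < p') (hu : 0 < u)
    (hq : 0 < q) :
    min (s * (p' + u) / (s + (p' + u)) * J1 ^ 2) ((p' + u) * q / ((p' + u) + q) * J2 ^ 2)
      ≤ s * p' / (s + p') * J1 ^ 2 + u * q / (u + q) * J2 ^ 2 := by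
  set p := p' + u with hp
  have hppos : 0 < p := by positivity
  have hA : (p' / p) * (s * p / (s + p) * J1 ^ 2) ≤ s * p' / (s + p') * J1 ^ 2 := by
    have h1 : (p' / p) * (s * p / (s + p)) ≤ s * p' / (s + p') := by
      rw [div_mul_div_comm]
      rw [div_le_div_iff₀ (by positivity) (by positivity)]
      nlinarith [mul_pos (mul_pos (mul_pos hs hp') hppos) hu]
    have := mul_le_mul_of_nonneg_right h1 (sq_nonneg J1)
    linarith [this]
  have hB : (u / p) * (p * q / (p + q) * J2 ^ 2) ≤ u * q / (u + q) * J2 ^ 2 := by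
    have h1 : (u / p) * (p * q / (p + q)) ≤ u * q / (u + q) := by
      rw [div_mul_div_comm]
      rw [div_le_div_iff₀ (by positivity) (by positivity)]
      nlinarith [mul_pos (mul_pos (mul_pos hu hq) hppos) hp']
    have := mul_le_mul_of_nonneg_right h1 (sq_nonneg J2)
    linarith [this]
  set M := min (s * p / (s + p) * J1 ^ 2) (p * q / (p + q) * J2 ^ 2) with hM
  have e : M = (p' / p) * M + (u / p) * M := by
    field_simp
    ring
  have m1 : (p' / p) * M ≤ (p' / p) * (s * p / (s + p) * J1 ^ 2) :=
    mul_le_mul_of_nonneg_left (min_le_left _ _) (by positivity)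
  have m2 : (u / p) * M ≤ (u / p) * (p * q / (p + q) * J2 ^ 2) :=
    mul_le_mul_of_nonneg_left (min_le_right _ _) (by positivity)
  linarith


variable {H : Type*} [NormedAddCommGroup H] [InnerProductSpace ℝ H]

noncomputable def wgt (a : ℕ → ℕ) (f : ℕ → H) (i : ℕ) : ℝ :=
  ((a (i + 1) - a i : ℕ) : ℝ) * ((a (i + 2) - a (i + 1) : ℕ) : ℝ)
    / (((a (i + 1) - a i : ℕ) : ℝ) + ((a (i + 2) - a (i + 1) : ℕ) : ℝ))
    * ‖f (a (i + 1)) - f (a i)‖ ^ 2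

lemma coreB1 (E D' : ℕ) (a b : ℕ → ℕ) (f : ℕ → H)
    (haN : a (E + 2) = b (D' + 1))
    (hamono : ∀ ℓ < E + 2, a ℓ < a (ℓ + 1))
    (hconst : ∀ ℓ < E + 2, ∀ k ∈ Finset.Ico (a ℓ) (a (ℓ + 1)), f k = f (a ℓ))
    (hB1 : b D' ≤ a E) :
    (Finset.range (E + 1)).inf' Finset.nonempty_range_add_one (wgt a f)
      ≤ ∑ j ∈ Finset.range (D' + 1), cost f (b j) (b (j + 1)) := by
  have amono := mono_of_step a (E + 2) (fun ℓ h => (hamono ℓ h).le)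
  have hx := hconst E (by omega)
  have hy := hconst (E + 1) (by omega)
  have htw := cost_two_group f (hamono E (by omega)) (hamono (E + 1) (by omega)) hx hy
  have hc1 : cost f (a E) (a (E + 2)) ≤ cost f (b D') (a (E + 2)) :=
    calc cost f (a E) (a (E + 2))
        ≤ cost f (b D') (a E) + cost f (a E) (a (E + 2)) :=
          le_add_of_nonneg_left (cost_nonneg _ _ _)
      _ ≤ cost f (b D') (a (E + 2)) :=
          cost_superadd f hB1 (amono E (E + 2) (by omega) le_rfl)
  have hsum : cost f (b D') (b (D' + 1))
      ≤ ∑ j ∈ Finset.range (D' + 1), cost f (b j) (b (j + 1)) := by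
    rw [Finset.sum_range_succ]
    exact le_add_of_nonneg_left (Finset.sum_nonneg fun j _ => cost_nonneg _ _ _)
  have hinf : (Finset.range (E + 1)).inf' Finset.nonempty_range_add_one (wgt a f)
      ≤ wgt a f E := Finset.inf'_le _ (Finset.mem_range.mpr (by omega))
  calc (Finset.range (E + 1)).inf' Finset.nonempty_range_add_one (wgt a f)
      ≤ wgt a f E := hinf
    _ ≤ cost f (a E) (a (E + 2)) := htw
    _ ≤ cost f (b D') (a (E + 2)) := hc1
    _ = cost f (b D') (b (D' + 1)) := by rw [haN]
    _ ≤ _ := hsum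

lemma core (E : ℕ) : ∀ (D' : ℕ) (a b : ℕ → ℕ) (f : ℕ → H),
    D' + 1 < E + 2 → a 0 = 0 → b 0 = 0 → a (E + 2) = b (D' + 1) →
    (∀ ℓ < E + 2, a ℓ < a (ℓ + 1)) → (∀ j < D' + 1, b j ≤ b (j + 1)) →
    (∀ ℓ < E + 2, ∀ k ∈ Finset.Ico (a ℓ) (a (ℓ + 1)), f k = f (a ℓ)) →
    (Finset.range (E + 1)).inf' Finset.nonempty_range_add_one (wgt a f)
      ≤ ∑ j ∈ Finset.range (D' + 1), cost f (b j) (b (j + 1)) := by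
  induction E with
  | zero =>
    intro D' a b f hD ha0 hb0 haN hamono hbmono hconst
    have hD0 : D' = 0 := by omega
    subst hD0
    exact coreB1 0 0 a b f haN hamono hconst (by omega)
  | succ k IH =>
    intro D' a b f hD ha0 hb0 haN hamono hbmono hconst
    have amono := mono_of_step a (k + 3) (fun ℓ h => (hamono ℓ h).le)
    rcases le_or_gt (b D') (a (k + 1)) with hB1 | h1
    · exact coreB1 (k + 1) D' a b f haN hamono hconst hB1
    have hD'pos : 1 ≤ D' := by
      rcases Nat.eq_zero_or_pos D' with h0 | h0
      · rw [h0, hb0] at h1; omega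
      · exact h0
    obtain ⟨D'', rfl⟩ : ∃ D'', D' = D'' + 1 := ⟨D' - 1, by omega⟩
    rcases le_or_gt (a (k + 2)) (b (D'' + 1)) with hA | h2
    · -- Case A: clip b at a (k+2)
      have IH2 := IH D'' a (fun j => min (b j) (a (k + 2))) f (by omega) ha0
        (by simp [hb0]) (by simp [min_eq_right hA])
        (fun ℓ hℓ => hamono ℓ (by omega))
        (fun j hj => min_le_min (hbmono j (by omega)) le_rfl)
        (fun ℓ hℓ => hconst ℓ (by omega))
      have hterm : ∑ j ∈ Finset.range (D'' + 1),
            cost f (min (b j) (a (k + 2))) (min (b (j + 1)) (a (k + 2)))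
          ≤ ∑ j ∈ Finset.range (D'' + 1), cost f (b j) (b (j + 1)) :=
        Finset.sum_le_sum fun j hj =>
          cost_clip f (b j) (b (j + 1)) (a (k + 2))
            (hbmono j (by have := Finset.mem_range.mp hj; omega))
      obtain ⟨i, hi, he⟩ := Finset.exists_mem_eq_inf'
        (Finset.nonempty_range_add_one : (Finset.range (k + 1)).Nonempty) (wgt a f)
      have hstep : (Finset.range (k + 2)).inf' Finset.nonempty_range_add_one (wgt a f)
          ≤ (Finset.range (k + 1)).inf' Finset.nonempty_range_add_one (wgt a f) := by
        rw [he]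
        exact Finset.inf'_le _ (Finset.mem_range.mpr (by
          have := Finset.mem_range.mp hi; omega))
      rw [Finset.sum_range_succ]
      have hnn : 0 ≤ cost f (b (D'' + 1)) (b (D'' + 1 + 1)) := cost_nonneg _ _ _
      linarith
    · -- Case B2
      set a' : ℕ → ℕ := fun j => if j = k + 2 then b (D'' + 1) else a j with ha'
      have e0 : ∀ j, j ≠ k + 2 → a' j = a j := fun j hj => by
        rw [ha']; exact if_neg hj
      have e2 : a' (k + 2) = b (D'' + 1) := by rw [ha']; exact if_pos rfl
      have IH2 := IH D'' a' b f (by omega)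
        (by rw [e0 0 (by omega)]; exact ha0) hb0 (e2.symm ▸ rfl)
        (by
          intro ℓ hℓ
          by_cases hc : ℓ = k + 1
          · subst hc
            rw [e0 (k + 1) (by omega), e2]
            exact h1
          · rw [e0 ℓ (by omega), e0 (ℓ + 1) (by omega)]
            exact hamono ℓ (by omega))
        (fun j hj => hbmono j (by omega))
        (by
          intro ℓ hℓ j hj
          by_cases hc : ℓ = k + 1
          · subst hc
            rw [e0 (k + 1) (by omega)] at hj ⊢
            rw [e2] at hj
            refine hconst (k + 1) (by omega) j ?_
            rw [Finset.mem_Ico] at hj ⊢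
            exact ⟨hj.1, lt_of_lt_of_le hj.2 h2.le⟩
          · rw [e0 ℓ (by omega)] at hj ⊢
            rw [e0 (ℓ + 1) (by omega)] at hj
            exact hconst ℓ (by omega) j hj)
      -- last-term two-group bound
      have hx2 : ∀ j ∈ Finset.Ico (b (D'' + 1)) (a (k + 2)), f j = f (a (k + 1)) := by
        intro j hj
        rw [Finset.mem_Ico] at hj
        exact hconst (k + 1) (by omega) j
          (Finset.mem_Ico.mpr ⟨le_trans h1.le hj.1, hj.2⟩)
      have htw := cost_two_group f h2 (hamono (k + 2) (by omega)) hx2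
        (hconst (k + 2) (by omega))
      obtain ⟨i₀, hi₀, hinf⟩ := Finset.exists_mem_eq_inf'
        (Finset.nonempty_range_add_one : (Finset.range (k + 1)).Nonempty) (wgt a' f)
      have hi₀lt : i₀ < k + 1 := Finset.mem_range.mp hi₀
      rw [Finset.sum_range_succ]
      have hlasteq : b (D'' + 1 + 1) = a (k + 3) := haN.symm
      by_cases hc : i₀ = k
      · -- boundary window
        rw [hc] at hinf
        have hs : (0:ℝ) < ((a (k + 1) - a k : ℕ) : ℝ) := by
          have := hamono k (by omega); exact_mod_cast Nat.sub_pos_of_lt this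
        have hp' : (0:ℝ) < ((b (D'' + 1) - a (k + 1) : ℕ) : ℝ) := by
          exact_mod_cast Nat.sub_pos_of_lt h1
        have hu : (0:ℝ) < ((a (k + 2) - b (D'' + 1) : ℕ) : ℝ) := by
          exact_mod_cast Nat.sub_pos_of_lt h2
        have hq : (0:ℝ) < ((a (k + 3) - a (k + 2) : ℕ) : ℝ) := by
          have := hamono (k + 2) (by omega); exact_mod_cast Nat.sub_pos_of_lt this
        have key := min_split_scalar (J1 := ‖f (a (k + 1)) - f (a k)‖)
          (J2 := ‖f (a (k + 2)) - f (a (k + 1))‖) hs hp' hu hq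
        have hPU : ((b (D'' + 1) - a (k + 1) : ℕ) : ℝ) + ((a (k + 2) - b (D'' + 1) : ℕ) : ℝ)
            = ((a (k + 2) - a (k + 1) : ℕ) : ℝ) := by
          rw [← Nat.cast_add]
          congr 1
          omega
        have hw1 : wgt a f k
            = ((a (k + 1) - a k : ℕ) : ℝ)
                * (((b (D'' + 1) - a (k + 1) : ℕ) : ℝ) + ((a (k + 2) - b (D'' + 1) : ℕ) : ℝ))
                / (((a (k + 1) - a k : ℕ) : ℝ)
                    + (((b (D'' + 1) - a (k + 1) : ℕ) : ℝ)
                        + ((a (k + 2) - b (D'' + 1) : ℕ) : ℝ)))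
                * ‖f (a (k + 1)) - f (a k)‖ ^ 2 := by
          rw [hPU]; rfl
        have hw2 : wgt a f (k + 1)
            = (((b (D'' + 1) - a (k + 1) : ℕ) : ℝ) + ((a (k + 2) - b (D'' + 1) : ℕ) : ℝ))
                * ((a (k + 3) - a (k + 2) : ℕ) : ℝ)
                / ((((b (D'' + 1) - a (k + 1) : ℕ) : ℝ)
                      + ((a (k + 2) - b (D'' + 1) : ℕ) : ℝ))
                    + ((a (k + 3) - a (k + 2) : ℕ) : ℝ))
                * ‖f (a (k + 2)) - f (a (k + 1))‖ ^ 2 := by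
          rw [hPU]; rfl
        have hw3 : wgt a' f k
            = ((a (k + 1) - a k : ℕ) : ℝ) * ((b (D'' + 1) - a (k + 1) : ℕ) : ℝ)
                / (((a (k + 1) - a k : ℕ) : ℝ) + ((b (D'' + 1) - a (k + 1) : ℕ) : ℝ))
                * ‖f (a (k + 1)) - f (a k)‖ ^ 2 := by
          unfold wgt
          rw [e0 k (by omega), e0 (k + 1) (by omega), e2]
        have t1 : (Finset.range (k + 2)).inf' Finset.nonempty_range_add_one (wgt a f)
            ≤ wgt a f k := Finset.inf'_le _ (Finset.mem_range.mpr (by omega))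
        have t2 : (Finset.range (k + 2)).inf' Finset.nonempty_range_add_one (wgt a f)
            ≤ wgt a f (k + 1) := Finset.inf'_le _ (Finset.mem_range.mpr (by omega))
        have hSk : wgt a' f k
            ≤ ∑ j ∈ Finset.range (D'' + 1), cost f (b j) (b (j + 1)) := by
          rw [← hinf]; exact IH2
        have hcost2 : ((a (k + 2) - b (D'' + 1) : ℕ) : ℝ) * ((a (k + 3) - a (k + 2) : ℕ) : ℝ)
              / (((a (k + 2) - b (D'' + 1) : ℕ) : ℝ) + ((a (k + 3) - a (k + 2) : ℕ) : ℝ))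
              * ‖f (a (k + 2)) - f (a (k + 1))‖ ^ 2
            ≤ cost f (b (D'' + 1)) (b (D'' + 1 + 1)) := by
          rw [hlasteq]; exact htw
        have hfin := le_min t1 t2
        rw [hw1, hw2] at hfin
        rw [hw3] at hSk
        linarith
      · -- generic window
        have hww : wgt a' f i₀ = wgt a f i₀ := by
          unfold wgt
          rw [e0 i₀ (by omega), e0 (i₀ + 1) (by omega), e0 (i₀ + 2) (by omega)]
        have t1 : (Finset.range (k + 2)).inf' Finset.nonempty_range_add_one (wgt a f)
            ≤ wgt a f i₀ := Finset.inf'_le _ (Finset.mem_range.mpr (by omega))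
        have hnn : 0 ≤ cost f (b (D'' + 1)) (b (D'' + 1 + 1)) := cost_nonneg _ _ _
        have : wgt a f i₀ ≤ ∑ j ∈ Finset.range (D'' + 1), cost f (b j) (b (j + 1)) := by
          rw [← hww, ← hinf]; exact IH2
        linarith

end CPAux

namespace CPGlue

open CPAux

variable {n : ℕ}

lemma tmono (τ : Seg n) : ∀ i j, i ≤ j → j ≤ τ.D → τ.t i ≤ τ.t j :=
  CPAux.mono_of_step τ.t τ.D (fun ℓ h => (τ.hmono ℓ h).le)

lemma t_le_n (τ : Seg n) {ℓ : ℕ} (h : ℓ ≤ τ.D) : τ.t ℓ ≤ n := by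
  have := tmono τ ℓ τ.D h le_rfl
  rw [τ.hn] at this
  exact this

lemma mem_seg_iff (τ : Seg n) {ℓ : ℕ} {j : Fin n} :
    j ∈ τ.seg ℓ ↔ τ.t ℓ ≤ (j : ℕ) ∧ (j : ℕ) < τ.t (ℓ + 1) := by
  simp [Seg.seg]

lemma sum_seg {M : Type*} [AddCommMonoid M] (τ : Seg n) (ℓ : ℕ) (hle : τ.t (ℓ + 1) ≤ n)
    (g : ℕ → M) :
    ∑ j ∈ τ.seg ℓ, g (j : ℕ) = ∑ k ∈ Finset.Ico (τ.t ℓ) (τ.t (ℓ + 1)), g k := by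
  apply Finset.sum_bij (fun (j : Fin n) (_ : j ∈ τ.seg ℓ) => (j : ℕ))
  · intro a ha
    rw [Finset.mem_Ico]
    exact (mem_seg_iff τ).mp ha
  · intro a ha b hb h
    exact Fin.ext h
  · intro k hk
    rw [Finset.mem_Ico] at hk
    exact ⟨⟨k, lt_of_lt_of_le hk.2 hle⟩, (mem_seg_iff τ).mpr hk, rfl⟩
  · intro a ha
    rfl

lemma card_seg (τ : Seg n) (ℓ : ℕ) (hle : τ.t (ℓ + 1) ≤ n) :
    (τ.seg ℓ).card = τ.t (ℓ + 1) - τ.t ℓ := by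
  rw [Finset.card_eq_sum_ones, sum_seg τ ℓ hle (fun _ => 1), ← Finset.card_eq_sum_ones,
    Nat.card_Ico]

lemma exists_seg (τ : Seg n) (i : Fin n) :
    ∃ ℓ, ℓ < τ.D ∧ τ.t ℓ ≤ (i : ℕ) ∧ (i : ℕ) < τ.t (ℓ + 1) := by
  classical
  set S := (Finset.range τ.D).filter (fun ℓ => τ.t ℓ ≤ (i : ℕ)) with hS
  have h0 : 0 ∈ S := by
    rw [hS, Finset.mem_filter, Finset.mem_range]
    exact ⟨τ.hD, by rw [τ.h0]; exact Nat.zero_le _⟩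
  set ℓ := S.max' ⟨0, h0⟩ with hℓdef
  have hmem : ℓ ∈ S := S.max'_mem _
  rw [hS, Finset.mem_filter, Finset.mem_range] at hmem
  refine ⟨ℓ, hmem.1, hmem.2, ?_⟩
  by_contra hcon
  push_neg at hcon
  have hlt : ℓ + 1 < τ.D := by
    rcases Nat.lt_or_ge (ℓ + 1) τ.D with h | h
    · exact h
    · exfalso
      have : ℓ + 1 = τ.D := by omega
      have hn := τ.hn
      rw [← this] at hn
      have := i.isLt
      omega
  have : ℓ + 1 ∈ S := by
    rw [hS, Finset.mem_filter, Finset.mem_range]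
    exact ⟨hlt, hcon⟩
  have := S.le_max' _ this
  omega

lemma loc_unique (τ : Seg n) {i : ℕ} {ℓ ℓ' : ℕ} (hℓ : ℓ < τ.D) (hℓ' : ℓ' < τ.D)
    (h1 : τ.t ℓ ≤ i) (h2 : i < τ.t (ℓ + 1)) (h1' : τ.t ℓ' ≤ i) (h2' : i < τ.t (ℓ' + 1)) :
    ℓ = ℓ' := by
  rcases lt_trichotomy ℓ ℓ' with h | h | h
  · exfalso
    have := tmono τ (ℓ + 1) ℓ' (by omega) (by omega)
    omega
  · exact h
  · exfalso
    have := tmono τ (ℓ' + 1) ℓ (by omega) (by omega)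
    omega

variable {H : Type*} [NormedAddCommGroup H] [InnerProductSpace ℝ H]

lemma proj_eq (τ : Seg n) (μ : Fin n → H) (i : Fin n) {ℓ : ℕ} (hℓ : ℓ < τ.D)
    (h1 : τ.t ℓ ≤ (i : ℕ)) (h2 : (i : ℕ) < τ.t (ℓ + 1)) :
    Seg.proj τ μ i
      = (((τ.t (ℓ + 1) - τ.t ℓ : ℕ) : ℝ))⁻¹ • ∑ j ∈ τ.seg ℓ, μ j := by
  unfold Seg.proj
  rw [Finset.sum_eq_single_of_mem ℓ (Finset.mem_range.mpr hℓ)]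
  · rw [if_pos ⟨h1, h2⟩]
  · intro b hb hbne
    rw [if_neg]
    intro hcon
    exact hbne (loc_unique τ (Finset.mem_range.mp hb) hℓ hcon.1 hcon.2 h1 h2)

lemma sum_univ_seg {M : Type*} [AddCommMonoid M] (τ : Seg n) (g : Fin n → M) :
    ∑ i, g i = ∑ ℓ ∈ Finset.range τ.D, ∑ i ∈ τ.seg ℓ, g i := by
  classical
  have : ∀ ℓ, ∑ i ∈ τ.seg ℓ, g i
      = ∑ i : Fin n, if τ.t ℓ ≤ (i : ℕ) ∧ (i : ℕ) < τ.t (ℓ + 1) then g i else 0 := by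
    intro ℓ
    rw [Seg.seg, Finset.sum_filter]
  simp_rw [this]
  rw [Finset.sum_comm]
  apply Finset.sum_congr rfl
  intro i _
  obtain ⟨ℓ₀, hℓ₀, hm1, hm2⟩ := exists_seg τ i
  rw [Finset.sum_eq_single_of_mem ℓ₀ (Finset.mem_range.mpr hℓ₀)]
  · rw [if_pos ⟨hm1, hm2⟩]
  · intro b hb hbne
    rw [if_neg]
    intro hcon
    exact hbne (loc_unique τ (Finset.mem_range.mp hb) hℓ₀ hcon.1 hcon.2 hm1 hm2)

end CPGlue

namespace CPGlue

open CPAux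

variable {n : ℕ} {H : Type*} [NormedAddCommGroup H] [InnerProductSpace ℝ H]

noncomputable def fext (μ : Fin n → H) : ℕ → H := fun k => if h : k < n then μ ⟨k, h⟩ else 0

lemma fext_coe (μ : Fin n → H) (j : Fin n) : fext μ (j : ℕ) = μ j := by
  simp [fext, j.isLt]

lemma seg_cost (τ : Seg n) (μ : Fin n → H) {ℓ : ℕ} (hℓ : ℓ < τ.D) :
    ∑ i ∈ τ.seg ℓ, ‖μ i - Seg.proj τ μ i‖ ^ 2
      = cost (fext μ) (τ.t ℓ) (τ.t (ℓ + 1)) := by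
  have hle : τ.t (ℓ + 1) ≤ n := t_le_n τ (by omega)
  have havg : avg (fext μ) (τ.t ℓ) (τ.t (ℓ + 1))
      = (((τ.t (ℓ + 1) - τ.t ℓ : ℕ) : ℝ))⁻¹ • ∑ j ∈ τ.seg ℓ, μ j := by
    rw [avg, ← sum_seg τ ℓ hle (fext μ)]
    congr 1
    exact Finset.sum_congr rfl fun j _ => fext_coe μ j
  have hpt : ∀ i ∈ τ.seg ℓ, ‖μ i - Seg.proj τ μ i‖ ^ 2
      = ‖fext μ (i : ℕ) - avg (fext μ) (τ.t ℓ) (τ.t (ℓ + 1))‖ ^ 2 := by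
    intro i hi
    rw [mem_seg_iff τ] at hi
    rw [proj_eq τ μ i hℓ hi.1 hi.2, fext_coe, havg]
  rw [Finset.sum_congr rfl hpt,
    sum_seg τ ℓ hle (fun k => ‖fext μ k - avg (fext μ) (τ.t ℓ) (τ.t (ℓ + 1))‖ ^ 2)]
  rfl

lemma hnorm2_eq (τ : Seg n) (μ : Fin n → H) :
    hnorm2 (fun i => μ i - Seg.proj τ μ i)
      = ∑ ℓ ∈ Finset.range τ.D, cost (fext μ) (τ.t ℓ) (τ.t (ℓ + 1)) := by
  rw [hnorm2, sum_univ_seg τ]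
  exact Finset.sum_congr rfl fun ℓ hℓ => seg_cost τ μ (Finset.mem_range.mp hℓ)

end CPGlue

/-- Stronger form of Lemma 5.2: for any `τ` with `D_τ < D_{τ*}`,
`‖μ* − Π_τ μ*‖² ≥ min_{1 ≤ i ≤ D_{τ*}−1} (|λ*_i||λ*_{i+1}| / (|λ*_i| + |λ*_{i+1}|))
· ‖μ*_{λ*_{i+1}} − μ*_{λ*_i}‖²`. -/
theorem approx_error_lower_bound_strong {H : Type*}
    [NormedAddCommGroup H] [InnerProductSpace ℝ H]
    {n : ℕ} (μs : Fin n → H) (τs : Seg n) (hτs : IsTrueSeg τs μs) (hDs : 2 ≤ τs.D)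
    (τ : Seg n) (hτ : τ.D < τs.D) :
    hnorm2 (fun i => μs i - Seg.proj τ μs i)
      ≥ (Finset.range (τs.D - 1)).inf' (Finset.nonempty_range_iff.mpr (by omega))
          fun ℓ =>
            ((τs.seg ℓ).card : ℝ) * ((τs.seg (ℓ + 1)).card : ℝ)
                / (((τs.seg ℓ).card : ℝ) + ((τs.seg (ℓ + 1)).card : ℝ))
              * ‖segVal τs μs (ℓ + 1) - segVal τs μs ℓ‖ ^ 2 := by
  classical
  obtain ⟨E, hE⟩ : ∃ E, τs.D = E + 2 := ⟨τs.D - 2, by omega⟩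
  obtain ⟨D', hD'⟩ : ∃ D', τ.D = D' + 1 := ⟨τ.D - 1, by have := τ.hD; omega⟩
  set f : ℕ → H := CPGlue.fext μs with hf
  have hconst : ∀ ℓ < E + 2, ∀ k ∈ Finset.Ico (τs.t ℓ) (τs.t (ℓ + 1)), f k = f (τs.t ℓ) := by
    intro ℓ hℓ k hk
    have hℓD : ℓ < τs.D := by omega
    have hle : τs.t (ℓ + 1) ≤ n := CPGlue.t_le_n τs (by omega)
    rw [Finset.mem_Ico] at hk
    have hkn : k < n := lt_of_lt_of_le hk.2 hle
    have htn : τs.t ℓ < n := lt_of_lt_of_le (τs.hmono ℓ hℓD) hle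
    have h1 : f k = μs ⟨k, hkn⟩ := dif_pos hkn
    have h2 : f (τs.t ℓ) = μs ⟨τs.t ℓ, htn⟩ := dif_pos htn
    rw [h1, h2]
    exact hτs.1 ℓ hℓD ⟨k, hkn⟩ ((CPGlue.mem_seg_iff τs).mpr hk) ⟨τs.t ℓ, htn⟩
      ((CPGlue.mem_seg_iff τs).mpr ⟨le_rfl, τs.hmono ℓ hℓD⟩)
  have hcore := CPAux.core E D' τs.t τ.t f (by omega)
    τs.h0 τ.h0 (by rw [← hE, τs.hn, ← hD', τ.hn])
    (fun ℓ hℓ => τs.hmono ℓ (by omega))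
    (fun j hj => (τ.hmono j (by omega)).le) hconst
  have hvals : ∀ ℓ ∈ Finset.range (τs.D - 1),
      ((τs.seg ℓ).card : ℝ) * ((τs.seg (ℓ + 1)).card : ℝ)
          / (((τs.seg ℓ).card : ℝ) + ((τs.seg (ℓ + 1)).card : ℝ))
        * ‖segVal τs μs (ℓ + 1) - segVal τs μs ℓ‖ ^ 2
      = CPAux.wgt τs.t f ℓ := by
    intro ℓ hℓ
    have hℓ1 : ℓ < τs.D - 1 := Finset.mem_range.mp hℓ
    have hc1 : (τs.seg ℓ).card = τs.t (ℓ + 1) - τs.t ℓ :=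
      CPGlue.card_seg τs ℓ (CPGlue.t_le_n τs (by omega))
    have hc2 : (τs.seg (ℓ + 1)).card = τs.t (ℓ + 2) - τs.t (ℓ + 1) :=
      CPGlue.card_seg τs (ℓ + 1) (CPGlue.t_le_n τs (by omega))
    have ht1 : τs.t ℓ < n :=
      lt_of_lt_of_le (τs.hmono ℓ (by omega)) (CPGlue.t_le_n τs (by omega))
    have ht2 : τs.t (ℓ + 1) < n :=
      lt_of_lt_of_le (τs.hmono (ℓ + 1) (by omega)) (CPGlue.t_le_n τs (by omega))
    have hs1 : segVal τs μs ℓ = f (τs.t ℓ) := by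
      rw [segVal, dif_pos ht1, hf, CPGlue.fext]
      rw [dif_pos ht1]
    have hs2 : segVal τs μs (ℓ + 1) = f (τs.t (ℓ + 1)) := by
      rw [segVal, dif_pos ht2, hf, CPGlue.fext]
      rw [dif_pos ht2]
    rw [hc1, hc2, hs1, hs2, CPAux.wgt]
  have hsets : Finset.range (τs.D - 1) = Finset.range (E + 1) := congrArg Finset.range (by omega)
  have hinf_eq : (Finset.range (τs.D - 1)).inf'
        (Finset.nonempty_range_iff.mpr (by omega))
        (fun ℓ =>
          ((τs.seg ℓ).card : ℝ) * ((τs.seg (ℓ + 1)).card : ℝ)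
              / (((τs.seg ℓ).card : ℝ) + ((τs.seg (ℓ + 1)).card : ℝ))
            * ‖segVal τs μs (ℓ + 1) - segVal τs μs ℓ‖ ^ 2)
      = (Finset.range (E + 1)).inf' Finset.nonempty_range_add_one (CPAux.wgt τs.t f) :=
    Finset.inf'_congr _ hsets hvals
  rw [ge_iff_le, hinf_eq, CPGlue.hnorm2_eq τ μs, hD']
  exact hcore
end

section
/- Let μ* ∈ H^n be non-constant with true segmentation τ*. Then for any segmentation τ ∈ T_n: (1/n)‖μ* − Π_τ μ*‖² ≥ (1/2) min{ Λ̲_{τ*}, (1/n) d∞^{(1)}(τ*, τ) } Δ̲². -/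
open MeasureTheory ProbabilityTheory

namespace Seg

lemma t_add_le' {n : ℕ} (τ : Seg n) : ∀ b, b ≤ τ.D → ∀ a, a ≤ b → τ.t a + (b - a) ≤ τ.t b := by
  intro b
  induction b with
  | zero => intro _ a ha; interval_cases a; simp
  | succ b ih =>
    intro hb a ha
    rcases Nat.lt_succ_iff_lt_or_eq.mp (Nat.lt_succ_of_le ha) with h | h
    · have h1 := ih (by omega) a (by omega)
      have h2 := τ.hmono b (by omega)
      omega
    · subst h; omega

lemma t_le_t {n : ℕ} (τ : Seg n) {a b : ℕ} (hab : a ≤ b) (hb : b ≤ τ.D) :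
    τ.t a ≤ τ.t b := by
  have := τ.t_add_le' b hb a hab; omega

lemma proj_eq {n : ℕ} {H : Type*} [AddCommGroup H] [Module ℝ H] (τ : Seg n)
    (x : Fin n → H) {ℓ : ℕ} (hℓ : ℓ < τ.D) {i : Fin n} (h1 : τ.t ℓ ≤ (i : ℕ))
    (h2 : (i : ℕ) < τ.t (ℓ + 1)) :
    Seg.proj τ x i = (((τ.t (ℓ + 1) - τ.t ℓ : ℕ)) : ℝ)⁻¹ • ∑ j ∈ τ.seg ℓ, x j := by
  unfold Seg.proj
  rw [Finset.sum_eq_single_of_mem ℓ (Finset.mem_range.2 hℓ), if_pos ⟨h1, h2⟩]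
  intro b hb hbne
  rw [if_neg]
  rintro ⟨hb1, hb2⟩
  rcases lt_or_gt_of_ne hbne with h | h
  · have : τ.t (b + 1) ≤ τ.t ℓ := τ.t_le_t h (le_of_lt hℓ)
    omega
  · have : τ.t (ℓ + 1) ≤ τ.t b := τ.t_le_t h (Finset.mem_range.1 hb).le
    omega

end Seg

lemma card_filter_interval (n l u : ℕ) (hu : u ≤ n) :
    (Finset.univ.filter fun j : Fin n => l ≤ (j : ℕ) ∧ (j : ℕ) < u).card = u - l := by
  have key : (Finset.univ.filter fun j : Fin n => l ≤ (j : ℕ) ∧ (j : ℕ) < u)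
      = (Finset.Ico l u).attachFin (fun m hm => lt_of_lt_of_le (Finset.mem_Ico.1 hm).2 hu) := by
    ext a
    simp [Finset.mem_attachFin, Finset.mem_Ico]
  rw [key, Finset.card_attachFin, Nat.card_Ico]

lemma half_sq {H : Type*} [NormedAddCommGroup H] (a b c : H) :
    ‖a - b‖ ^ 2 / 2 ≤ ‖a - c‖ ^ 2 + ‖b - c‖ ^ 2 := by
  have h1 : ‖a - b‖ ≤ ‖a - c‖ + ‖b - c‖ := by
    calc ‖a - b‖ = ‖(a - c) + (c - b)‖ := by rw [sub_add_sub_cancel]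
      _ ≤ ‖a - c‖ + ‖c - b‖ := norm_add_le _ _
      _ = ‖a - c‖ + ‖b - c‖ := by rw [norm_sub_rev c b]
  nlinarith [sq_nonneg (‖a - c‖ - ‖b - c‖), mul_self_le_mul_self (norm_nonneg (a - b)) h1]

/-- Lemma 5.3: for any segmentation `τ`,
`(1/n)‖μ* − Π_τ μ*‖² ≥ (1/2) min{Λ̲_{τ*}, (1/n) d∞^{(1)}(τ*, τ)} Δ̲²`. -/
theorem approx_error_lower_bound_general {H : Type*}
    [NormedAddCommGroup H] [InnerProductSpace ℝ H]
    {n : ℕ} (μs : Fin n → H) (τs : Seg n) (hτs : IsTrueSeg τs μs) (hDs : 2 ≤ τs.D)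
    (τ : Seg n) :
    (1 / n) * hnorm2 (fun i => μs i - Seg.proj τ μs i)
      ≥ (1 / 2) * min (Seg.lamMin τs) ((Seg.dinf1 τs τ : ℝ) / n)
          * (deltaMin τs μs) ^ 2 := by
  classical
  have hn : 2 ≤ n := by
    have := τs.t_add_le' τs.D le_rfl 0 (Nat.zero_le _)
    rw [τs.h0, τs.hn] at this
    omega
  have hn0 : (0 : ℝ) < n := by exact_mod_cast (show 0 < n by omega)
  set s : ℕ := (Finset.range τs.D).inf' (Finset.nonempty_range_iff.mpr τs.hD.ne')
      (fun ℓ => τs.t (ℓ + 1) - τs.t ℓ) with hs_def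
  have hs_le : ∀ ℓ < τs.D, s ≤ τs.t (ℓ + 1) - τs.t ℓ := fun ℓ hℓ =>
    Finset.inf'_le _ (Finset.mem_range.2 hℓ)
  have hs1 : 1 ≤ s := by
    apply Finset.le_inf'
    intro ℓ hℓ
    have := τs.hmono ℓ (Finset.mem_range.1 hℓ)
    omega
  have hlam : Seg.lamMin τs = (s : ℝ) / n := by rw [hs_def]; rfl
  set d : ℕ := Seg.dinf1 τs τ with hd_def
  obtain ⟨i, hi0, hiD, hidist⟩ :
      ∃ i, 0 < i ∧ i < τs.D ∧ ∀ j, 0 < j → j < τ.D → d ≤ Nat.dist (τs.t i) (τ.t j) := by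
    by_cases hD2 : 2 ≤ τ.D
    · have hne : (Finset.Ioo 0 τs.D).Nonempty :=
        ⟨1, Finset.mem_Ioo.mpr ⟨Nat.one_pos, by omega⟩⟩
      obtain ⟨i, hi, hsup⟩ := Finset.exists_mem_eq_sup (Finset.Ioo 0 τs.D) hne
        (fun i => (Finset.Ioo 0 τ.D).inf'
          ⟨1, Finset.mem_Ioo.mpr ⟨Nat.one_pos, by omega⟩⟩
          fun j => Nat.dist (τs.t i) (τ.t j))
      refine ⟨i, (Finset.mem_Ioo.1 hi).1, (Finset.mem_Ioo.1 hi).2, ?_⟩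
      intro j hj0 hjD
      have hdval : d = (Finset.Ioo 0 τ.D).inf'
          ⟨1, Finset.mem_Ioo.mpr ⟨Nat.one_pos, by omega⟩⟩
          (fun j => Nat.dist (τs.t i) (τ.t j)) := by
        rw [hd_def]
        unfold Seg.dinf1
        rw [dif_pos ⟨hDs, hD2⟩]
        exact hsup
      rw [hdval]
      exact Finset.inf'_le _ (Finset.mem_Ioo.mpr ⟨hj0, hjD⟩)
    · refine ⟨1, Nat.one_pos, by omega, ?_⟩
      intro j hj0 hjD
      have := τ.hD
      omega
  have hseglen_l : s + τs.t (i - 1) ≤ τs.t i := by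
    have h1 := hs_le (i - 1) (by omega)
    have h2 : τs.t (i - 1) ≤ τs.t i := τs.t_le_t (by omega) (by omega)
    have h3 : i - 1 + 1 = i := by omega
    rw [h3] at h1
    omega
  have hseglen_r : τs.t i + s ≤ τs.t (i + 1) := by
    have h1 := hs_le i hiD
    have h2 : τs.t i ≤ τs.t (i + 1) := τs.t_le_t (by omega) (by omega)
    omega
  have htn : τs.t i + s ≤ n := by
    have := τs.t_le_t (show i + 1 ≤ τs.D by omega) le_rfl
    rw [τs.hn] at this
    omega
  have hts : s ≤ τs.t i := by omega
  set m := min s d with hm_def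
  by_cases hm0 : m = 0
  · have hd0 : d = 0 := by omega
    rw [hd0]
    have hL : (0 : ℝ) ≤ Seg.lamMin τs := by rw [hlam]; positivity
    have hnn : 0 ≤ hnorm2 (fun i => μs i - Seg.proj τ μs i) := by
      unfold hnorm2; positivity
    have hΔ0 : (0 : ℝ) ≤ (deltaMin τs μs) ^ 2 := sq_nonneg _
    have hmin : min (Seg.lamMin τs) (((0 : ℕ) : ℝ) / n) = 0 := by
      rw [Nat.cast_zero, zero_div]
      exact min_eq_right hL
    rw [ge_iff_le, hmin]
    have : (0 : ℝ) ≤ 1 / (n : ℝ) * hnorm2 (fun i => μs i - Seg.proj τ μs i) :=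
      mul_nonneg (by positivity) hnn
    nlinarith
  have hm1 : 1 ≤ m := by omega
  have hms : m ≤ s := by omega
  have hmd : m ≤ d := by omega
  obtain ⟨ℓ, hℓD, hℓle, hℓge⟩ :
      ∃ ℓ, ℓ < τ.D ∧ τ.t ℓ ≤ τs.t i - m ∧ τs.t i + m ≤ τ.t (ℓ + 1) := by
    set S := (Finset.range τ.D).filter (fun ℓ => τ.t ℓ ≤ τs.t i - m) with hS
    have hSne : S.Nonempty := ⟨0, by simp [hS, τ.h0, τ.hD]⟩
    set ℓ0 := S.max' hSne with hℓ0
    have hmem : ℓ0 ∈ S := S.max'_mem hSne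
    rw [hS, Finset.mem_filter, Finset.mem_range] at hmem
    refine ⟨ℓ0, hmem.1, hmem.2, ?_⟩
    by_cases hend : ℓ0 + 1 = τ.D
    · rw [hend, τ.hn]
      omega
    · have hlt : ℓ0 + 1 < τ.D := by omega
      have hnotmem : ¬ (τ.t (ℓ0 + 1) ≤ τs.t i - m) := by
        intro hcon
        have hmem2 : ℓ0 + 1 ∈ S := by
          rw [hS, Finset.mem_filter, Finset.mem_range]
          exact ⟨hlt, hcon⟩
        have hle := S.le_max' _ hmem2
        rw [← hℓ0] at hle
        omega
      have hdist := hidist (ℓ0 + 1) (by omega) hlt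
      have hdist' : d ≤ τs.t i - τ.t (ℓ0 + 1) + (τ.t (ℓ0 + 1) - τs.t i) :=
        hdist
      omega
  have htlt : τs.t i < n := by omega
  have ht1 : τs.t i - 1 < n := by omega
  set a := μs ⟨τs.t i - 1, ht1⟩ with ha_def
  set b := μs ⟨τs.t i, htlt⟩ with hb_def
  have hii : i - 1 + 1 = i := by omega
  have hmema : ∀ k : Fin n, τs.t i - m ≤ (k : ℕ) → (k : ℕ) < τs.t i → μs k = a := by
    intro k hk1 hk2
    have hkm : k ∈ τs.seg (i - 1) := by
      simp only [Seg.seg, Finset.mem_filter, Finset.mem_univ, true_and, hii]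
      omega
    have ham : (⟨τs.t i - 1, ht1⟩ : Fin n) ∈ τs.seg (i - 1) := by
      simp only [Seg.seg, Finset.mem_filter, Finset.mem_univ, true_and, hii]
      omega
    exact hτs.1 (i - 1) (by omega) k hkm _ ham
  have hmemb : ∀ k : Fin n, τs.t i ≤ (k : ℕ) → (k : ℕ) < τs.t i + m → μs k = b := by
    intro k hk1 hk2
    have hkm : k ∈ τs.seg i := by
      simp only [Seg.seg, Finset.mem_filter, Finset.mem_univ, true_and]
      omega
    have hbm : (⟨τs.t i, htlt⟩ : Fin n) ∈ τs.seg i := by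
      simp only [Seg.seg, Finset.mem_filter, Finset.mem_univ, true_and]
      omega
    exact hτs.1 i hiD k hkm _ hbm
  have hjump : deltaMin τs μs ≤ ‖b - a‖ := by
    have hja : jumpAt τs μs i = ‖b - a‖ := by
      unfold jumpAt
      rw [dif_pos (show 0 < τs.t i ∧ τs.t i < n from ⟨by omega, htlt⟩)]
    unfold deltaMin
    rw [dif_pos hDs, ← hja]
    exact Finset.inf'_le _ (Finset.mem_Ioo.mpr ⟨hi0, hiD⟩)
  have hjump0 : 0 ≤ deltaMin τs μs := by
    unfold deltaMin
    rw [dif_pos hDs]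
    apply Finset.le_inf'
    intro j _
    unfold jumpAt
    split
    · exact norm_nonneg _
    · exact le_rfl
  set c := (((τ.t (ℓ + 1) - τ.t ℓ : ℕ)) : ℝ)⁻¹ • ∑ j ∈ τ.seg ℓ, μs j with hc_def
  have hproj : ∀ k : Fin n, τs.t i - m ≤ (k : ℕ) → (k : ℕ) < τs.t i + m →
      Seg.proj τ μs k = c := fun k h1 h2 =>
    Seg.proj_eq τ μs hℓD (by omega) (by omega)
  set WL := Finset.univ.filter
    (fun k : Fin n => τs.t i - m ≤ (k : ℕ) ∧ (k : ℕ) < τs.t i) with hWL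
  set WR := Finset.univ.filter
    (fun k : Fin n => τs.t i ≤ (k : ℕ) ∧ (k : ℕ) < τs.t i + m) with hWR
  have hdisj : Disjoint WL WR := by
    rw [Finset.disjoint_left]
    intro x h1 h2
    simp only [hWL, hWR, Finset.mem_filter, Finset.mem_univ, true_and] at h1 h2
    omega
  have hcardL : WL.card = m := by
    rw [hWL, card_filter_interval _ _ _ (le_of_lt htlt)]
    omega
  have hcardR : WR.card = m := by
    rw [hWR, card_filter_interval _ _ _ (by omega)]
    omega
  have hsumL : ∑ k ∈ WL, ‖μs k - c‖ ^ 2 = (m : ℝ) * ‖a - c‖ ^ 2 := by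
    have hcongr : ∀ k ∈ WL, ‖μs k - c‖ ^ 2 = ‖a - c‖ ^ 2 := by
      intro k hk
      simp only [hWL, Finset.mem_filter, Finset.mem_univ, true_and] at hk
      rw [hmema k hk.1 hk.2]
    rw [Finset.sum_congr rfl hcongr, Finset.sum_const, hcardL, nsmul_eq_mul]
  have hsumR : ∑ k ∈ WR, ‖μs k - c‖ ^ 2 = (m : ℝ) * ‖b - c‖ ^ 2 := by
    have hcongr : ∀ k ∈ WR, ‖μs k - c‖ ^ 2 = ‖b - c‖ ^ 2 := by
      intro k hk
      simp only [hWR, Finset.mem_filter, Finset.mem_univ, true_and] at hk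
      rw [hmemb k hk.1 hk.2]
    rw [Finset.sum_congr rfl hcongr, Finset.sum_const, hcardR, nsmul_eq_mul]
  have hhalf : ‖b - a‖ ^ 2 / 2 ≤ ‖b - c‖ ^ 2 + ‖a - c‖ ^ 2 := half_sq b a c
  have hmr : (0 : ℝ) ≤ (m : ℝ) := Nat.cast_nonneg m
  have key : (m : ℝ) * (‖b - a‖ ^ 2 / 2) ≤ ∑ k ∈ WL ∪ WR, ‖μs k - c‖ ^ 2 := by
    rw [Finset.sum_union hdisj, hsumL, hsumR]
    nlinarith [mul_le_mul_of_nonneg_left hhalf hmr]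
  have hsub : ∑ k ∈ WL ∪ WR, ‖μs k - c‖ ^ 2
      ≤ hnorm2 (fun k => μs k - Seg.proj τ μs k) := by
    have hcongr : ∀ k ∈ WL ∪ WR, ‖μs k - c‖ ^ 2 = ‖μs k - Seg.proj τ μs k‖ ^ 2 := by
      intro k hk
      simp only [hWL, hWR, Finset.mem_union, Finset.mem_filter, Finset.mem_univ,
        true_and] at hk
      rw [hproj k (by omega) (by omega)]
    calc ∑ k ∈ WL ∪ WR, ‖μs k - c‖ ^ 2
        = ∑ k ∈ WL ∪ WR, ‖μs k - Seg.proj τ μs k‖ ^ 2 := Finset.sum_congr rfl hcongr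
      _ ≤ ∑ k, ‖μs k - Seg.proj τ μs k‖ ^ 2 :=
          Finset.sum_le_sum_of_subset_of_nonneg (Finset.subset_univ _)
            (fun k _ _ => by positivity)
      _ = hnorm2 (fun k => μs k - Seg.proj τ μs k) := rfl
  have hdd : (m : ℝ) * ((deltaMin τs μs) ^ 2 / 2) ≤ (m : ℝ) * (‖b - a‖ ^ 2 / 2) := by
    have hsq : (deltaMin τs μs) ^ 2 ≤ ‖b - a‖ ^ 2 := pow_le_pow_left₀ hjump0 hjump 2
    have h2 : (deltaMin τs μs) ^ 2 / 2 ≤ ‖b - a‖ ^ 2 / 2 := by linarith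
    exact mul_le_mul_of_nonneg_left h2 hmr
  have hrhs : min (Seg.lamMin τs) ((d : ℝ) / n) = (m : ℝ) / n := by
    rw [hlam, hm_def]
    rw [min_div_div_right (le_of_lt hn0), ← Nat.cast_min]
  rw [ge_iff_le, hrhs]
  calc (1 : ℝ) / 2 * ((m : ℝ) / n) * (deltaMin τs μs) ^ 2
      = 1 / n * ((m : ℝ) * ((deltaMin τs μs) ^ 2 / 2)) := by ring
    _ ≤ 1 / n * hnorm2 (fun k => μs k - Seg.proj τ μs k) := by
        apply mul_le_mul_of_nonneg_left _ (by positivity)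
        linarith [hdd, key, hsub]
end

section
/- Let μ* ∈ H^n be non-constant with true segmentation τ*, and let ε = (ε_1,…,ε_n) ∈ H^n. Then for any segmentation τ ∈ T_n: |⟨μ* − Π_τ μ*, ε⟩| ≤ 6 D_{τ*} · max{D_{τ*}, D_τ} · Δ̄ · M_n, where M_n := max_{1≤k≤n} ‖Σ_{j=1}^k ε_j‖_H. -/
open MeasureTheory ProbabilityTheory

namespace SegAux

open Seg Finset

variable {n : ℕ}

lemma t_le_t (τ : Seg n) {a b : ℕ} (hab : a ≤ b) (hbD : b ≤ τ.D) : τ.t a ≤ τ.t b := by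
  induction b with
  | zero => simp [Nat.le_zero.mp hab]
  | succ b ih =>
    rcases Nat.eq_or_lt_of_le hab with h | h
    · rw [h]
    · exact le_trans (ih (by omega) (by omega)) (le_of_lt (τ.hmono b (by omega)))

lemma t_lt_t (τ : Seg n) {a b : ℕ} (hab : a < b) (hbD : b ≤ τ.D) : τ.t a < τ.t b :=
  lt_of_lt_of_le (τ.hmono a (by omega)) (t_le_t τ hab hbD)

lemma t_lt_n (τ : Seg n) {ℓ : ℕ} (h : ℓ < τ.D) : τ.t ℓ < n := by
  have := t_lt_t τ h le_rfl; rw [τ.hn] at this; exact this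

lemma t_pos (τ : Seg n) {ℓ : ℕ} (h0 : 0 < ℓ) (hD : ℓ ≤ τ.D) : 0 < τ.t ℓ := by
  have := t_lt_t τ h0 hD; rw [τ.h0] at this; exact this

lemma exists_seg (τ : Seg n) {i : ℕ} (hi : i < n) :
    ∃ ℓ < τ.D, τ.t ℓ ≤ i ∧ i < τ.t (ℓ + 1) := by
  classical
  have hex : ∃ ℓ, i < τ.t ℓ := ⟨τ.D, by rw [τ.hn]; exact hi⟩
  have hk : i < τ.t (Nat.find hex) := Nat.find_spec hex
  have hkD : Nat.find hex ≤ τ.D := Nat.find_min' hex (by rw [τ.hn]; exact hi)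
  have hk0 : Nat.find hex ≠ 0 := by
    intro h; rw [h, τ.h0] at hk; omega
  have hprev : ¬ i < τ.t (Nat.find hex - 1) := Nat.find_min hex (by omega)
  refine ⟨Nat.find hex - 1, by omega, by omega, ?_⟩
  rw [show Nat.find hex - 1 + 1 = Nat.find hex by omega]; exact hk

lemma mem_seg (τ : Seg n) {ℓ : ℕ} {i : Fin n} :
    i ∈ τ.seg ℓ ↔ τ.t ℓ ≤ (i : ℕ) ∧ (i : ℕ) < τ.t (ℓ + 1) := by
  simp [Seg.seg]

lemma card_seg (τ : Seg n) {ℓ : ℕ} (hℓ : ℓ < τ.D) :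
    (τ.seg ℓ).card = τ.t (ℓ + 1) - τ.t ℓ := by
  have hle : τ.t (ℓ + 1) ≤ n := by
    have := t_le_t τ (show ℓ + 1 ≤ τ.D by omega) le_rfl
    rw [τ.hn] at this; exact this
  rw [show τ.t (ℓ + 1) - τ.t ℓ = (Finset.Ico (τ.t ℓ) (τ.t (ℓ + 1))).card by
    rw [Nat.card_Ico]]
  apply Finset.card_bij (fun (i : Fin n) _ => (i : ℕ))
  · intro a ha; rw [mem_seg] at ha; simp [Finset.mem_Ico]; omega
  · intro a _ b _ h; exact Fin.ext h
  · intro b hb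
    simp only [Finset.mem_Ico] at hb
    exact ⟨⟨b, by omega⟩, (mem_seg τ).mpr (by simpa using hb), rfl⟩

lemma proj_eq {H : Type*} [AddCommGroup H] [Module ℝ H] (τ : Seg n) (x : Fin n → H)
    {ℓ : ℕ} (hℓ : ℓ < τ.D) {i : Fin n} (h1 : τ.t ℓ ≤ (i : ℕ)) (h2 : (i : ℕ) < τ.t (ℓ + 1)) :
    Seg.proj τ x i = (((τ.t (ℓ + 1) - τ.t ℓ : ℕ) : ℝ))⁻¹ • ∑ j ∈ τ.seg ℓ, x j := by
  unfold Seg.proj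
  rw [Finset.sum_eq_single ℓ]
  · rw [if_pos ⟨h1, h2⟩]
  · intro b hb hne
    rw [if_neg]
    rintro ⟨hb1, hb2⟩
    rcases lt_or_gt_of_ne hne with h | h
    · have := t_le_t τ (show b + 1 ≤ ℓ by omega) (by omega); omega
    · have := t_le_t τ (show ℓ + 1 ≤ b by omega) (le_of_lt (Finset.mem_range.mp hb)); omega
  · intro h; exact absurd (Finset.mem_range.mpr hℓ) h

lemma deltaMax_nonneg {H : Type*} [NormedAddCommGroup H] (τ : Seg n) (m : Fin n → H) :
    0 ≤ deltaMax τ m := by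
  unfold deltaMax
  split_ifs with h
  · refine le_trans ?_ (Finset.le_sup' (jumpAt τ m)
      (Finset.mem_Ioo.mpr ⟨Nat.one_pos, by omega⟩ : (1 : ℕ) ∈ _))
    unfold jumpAt; split_ifs
    · exact norm_nonneg _
    · exact le_rfl
  · exact le_rfl

lemma jumpAt_le_deltaMax {H : Type*} [NormedAddCommGroup H] (τ : Seg n) (m : Fin n → H)
    (hD : 2 ≤ τ.D) {ℓ : ℕ} (h0 : 0 < ℓ) (hℓ : ℓ < τ.D) :
    jumpAt τ m ℓ ≤ deltaMax τ m := by
  unfold deltaMax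
  rw [dif_pos hD]
  exact Finset.le_sup' (jumpAt τ m) (Finset.mem_Ioo.mpr ⟨h0, hℓ⟩)

section Main

variable {H : Type*} [NormedAddCommGroup H] [InnerProductSpace ℝ H]
variable (μs : Fin n → H) (τs : Seg n)

/-- any two values of `μs` are within `(D* - 1) Δ̄`. -/
lemma diam_bound (hτs : IsTrueSeg τs μs) (hDs : 2 ≤ τs.D) (i j : Fin n) :
    ‖μs i - μs j‖ ≤ ((τs.D : ℝ) - 1) * deltaMax τs μs := by
  have hΔ0 := deltaMax_nonneg τs μs
  -- value on segment ℓ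
  have hconst : ∀ ℓ, ∀ hℓ : ℓ < τs.D, ∀ i : Fin n, τs.t ℓ ≤ (i : ℕ) → (i : ℕ) < τs.t (ℓ + 1) →
      μs i = μs ⟨τs.t ℓ, t_lt_n τs hℓ⟩ := by
    intro ℓ hℓ i hi1 hi2
    exact hτs.1 ℓ hℓ i ((mem_seg τs).mpr ⟨hi1, hi2⟩)
      ⟨τs.t ℓ, t_lt_n τs hℓ⟩ ((mem_seg τs).mpr ⟨le_rfl, τs.hmono ℓ hℓ⟩)
  have step : ∀ ℓ, ∀ hℓ : ℓ + 1 < τs.D,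
      ‖μs ⟨τs.t (ℓ + 1), t_lt_n τs hℓ⟩ - μs ⟨τs.t ℓ, t_lt_n τs (by omega)⟩‖
        ≤ deltaMax τs μs := by
    intro ℓ hℓ
    have hpos : 0 < τs.t (ℓ + 1) := t_pos τs (by omega) (by omega)
    have hltn : τs.t (ℓ + 1) < n := t_lt_n τs hℓ
    have hmem : μs ⟨τs.t (ℓ + 1) - 1, by omega⟩ = μs ⟨τs.t ℓ, t_lt_n τs (by omega)⟩ := by
      have hm := τs.hmono ℓ (by omega)
      exact hconst ℓ (by omega) _ (by simp; omega) (by simp; omega)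
    have : jumpAt τs μs (ℓ + 1)
        = ‖μs ⟨τs.t (ℓ + 1), hltn⟩ - μs ⟨τs.t (ℓ + 1) - 1, by omega⟩‖ := by
      unfold jumpAt; rw [dif_pos ⟨hpos, hltn⟩]
    rw [hmem] at this
    rw [← this]
    exact jumpAt_le_deltaMax τs μs hDs (by omega) hℓ
  have tele : ∀ k a (h : a + k < τs.D),
      ‖μs ⟨τs.t (a + k), t_lt_n τs h⟩ - μs ⟨τs.t a, t_lt_n τs (by omega)⟩‖
        ≤ (k : ℝ) * deltaMax τs μs := by
    intro k
    induction k with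
    | zero => intro a h; simp
    | succ k ih =>
      intro a h
      have h1 : a + k < τs.D := by omega
      calc ‖μs ⟨τs.t (a + (k + 1)), t_lt_n τs h⟩ - μs ⟨τs.t a, t_lt_n τs (by omega)⟩‖
          ≤ ‖μs ⟨τs.t (a + (k + 1)), t_lt_n τs h⟩ - μs ⟨τs.t (a + k), t_lt_n τs h1⟩‖
            + ‖μs ⟨τs.t (a + k), t_lt_n τs h1⟩ - μs ⟨τs.t a, t_lt_n τs (by omega)⟩‖ :=
            norm_sub_le_norm_sub_add_norm_sub _ _ _
        _ ≤ deltaMax τs μs + (k : ℝ) * deltaMax τs μs := by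
            refine add_le_add ?_ (ih a h1)
            have := step (a + k) (by omega)
            have e : (⟨τs.t (a + (k + 1)), t_lt_n τs h⟩ : Fin n)
                = ⟨τs.t (a + k + 1), t_lt_n τs (by omega)⟩ := Fin.ext (congrArg τs.t (by omega))
            rw [e]; exact this
        _ = ((k + 1 : ℕ) : ℝ) * deltaMax τs μs := by push_cast; ring
  obtain ⟨ℓi, hℓi, hi1, hi2⟩ := exists_seg τs i.isLt
  obtain ⟨ℓj, hℓj, hj1, hj2⟩ := exists_seg τs j.isLt
  rw [hconst ℓi hℓi i hi1 hi2, hconst ℓj hℓj j hj1 hj2]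
  have hkey : ∀ a b : ℕ, ∀ (ha : a < τs.D) (hb : b < τs.D), a ≤ b →
      ‖μs ⟨τs.t b, t_lt_n τs hb⟩ - μs ⟨τs.t a, t_lt_n τs ha⟩‖
        ≤ ((τs.D : ℝ) - 1) * deltaMax τs μs := by
    intro a b ha hb hab
    have hab' : a + (b - a) < τs.D := by omega
    have e : a + (b - a) = b := by omega
    have htel := tele (b - a) a hab'
    have e2 : (⟨τs.t (a + (b - a)), t_lt_n τs hab'⟩ : Fin n) = ⟨τs.t b, t_lt_n τs hb⟩ :=
      Fin.ext (congrArg τs.t e)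
    rw [e2] at htel
    calc ‖μs ⟨τs.t b, t_lt_n τs hb⟩ - μs ⟨τs.t a, t_lt_n τs ha⟩‖
        ≤ ((b - a : ℕ) : ℝ) * deltaMax τs μs := htel
      _ ≤ ((τs.D : ℝ) - 1) * deltaMax τs μs := by
          apply mul_le_mul_of_nonneg_right _ (deltaMax_nonneg τs μs)
          have h1 : (b - a : ℕ) ≤ τs.D - 1 := by omega
          have := Nat.cast_le (α := ℝ) |>.mpr h1
          have h2 : ((τs.D - 1 : ℕ) : ℝ) = (τs.D : ℝ) - 1 := by
            have : 1 ≤ τs.D := by omega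
            push_cast [this]; ring
          linarith
  rcases le_total ℓi ℓj with h | h
  · rw [norm_sub_rev]; exact hkey ℓi ℓj hℓi hℓj h
  · exact hkey ℓj ℓi hℓj hℓi h

/-- distance from a segment average to any value of `μs`. -/
lemma avg_bound (hτs : IsTrueSeg τs μs) (hDs : 2 ≤ τs.D) (τ : Seg n)
    {ℓ : ℕ} (hℓ : ℓ < τ.D) (j : Fin n) :
    ‖(((τ.t (ℓ + 1) - τ.t ℓ : ℕ) : ℝ))⁻¹ • ∑ k ∈ τ.seg ℓ, μs k - μs j‖
      ≤ ((τs.D : ℝ) - 1) * deltaMax τs μs := by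
  set c : ℕ := τ.t (ℓ + 1) - τ.t ℓ with hc
  have hc0 : 0 < c := by have := τ.hmono ℓ hℓ; omega
  have hcR : (0 : ℝ) < (c : ℝ) := by exact_mod_cast hc0
  have hcard : (τ.seg ℓ).card = c := card_seg τ hℓ
  have hrw : ((c : ℝ))⁻¹ • ∑ k ∈ τ.seg ℓ, μs k - μs j
      = ((c : ℝ))⁻¹ • ∑ k ∈ τ.seg ℓ, (μs k - μs j) := by
    rw [Finset.sum_sub_distrib, smul_sub]
    congr 1
    rw [Finset.sum_const, hcard, ← Nat.cast_smul_eq_nsmul ℝ, smul_smul,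
      inv_mul_cancel₀ (ne_of_gt hcR), one_smul]
  rw [hrw, norm_smul]
  have hsum : ‖∑ k ∈ τ.seg ℓ, (μs k - μs j)‖
      ≤ (c : ℝ) * (((τs.D : ℝ) - 1) * deltaMax τs μs) := by
    refine le_trans (norm_sum_le _ _) ?_
    calc ∑ k ∈ τ.seg ℓ, ‖μs k - μs j‖
        ≤ (τ.seg ℓ).card • (((τs.D : ℝ) - 1) * deltaMax τs μs) :=
          Finset.sum_le_card_nsmul _ _ _ (fun k _ => diam_bound μs τs hτs hDs k j)
      _ = (c : ℝ) * (((τs.D : ℝ) - 1) * deltaMax τs μs) := by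
          rw [hcard, nsmul_eq_mul]
  calc ‖((c : ℝ))⁻¹‖ * ‖∑ k ∈ τ.seg ℓ, (μs k - μs j)‖
      ≤ ((c : ℝ))⁻¹ * ((c : ℝ) * (((τs.D : ℝ) - 1) * deltaMax τs μs)) := by
        rw [norm_inv, Real.norm_natCast]
        exact mul_le_mul_of_nonneg_left hsum (by positivity)
    _ = ((τs.D : ℝ) - 1) * deltaMax τs μs := by field_simp

lemma proj_sub_bound (hτs : IsTrueSeg τs μs) (hDs : 2 ≤ τs.D) (τ : Seg n) (i : Fin n) :
    ‖Seg.proj τ μs i - μs i‖ ≤ ((τs.D : ℝ) - 1) * deltaMax τs μs := by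
  obtain ⟨ℓ, hℓ, h1, h2⟩ := exists_seg τ i.isLt
  rw [proj_eq τ μs hℓ h1 h2]
  exact avg_bound μs τs hτs hDs τ hℓ i

/-- if `i+1` is not an interior change-point of `τ`, then `i` and `i+1` are in the
same segment of `τ`. -/
lemma succ_same_seg (τ : Seg n) {i : ℕ} (h : i + 1 < n)
    (hnc : ∀ ℓ, 0 < ℓ → ℓ < τ.D → τ.t ℓ ≠ i + 1) :
    ∃ ℓ < τ.D, τ.t ℓ ≤ i ∧ i + 1 < τ.t (ℓ + 1) := by
  obtain ⟨ℓ, hℓ, h1, h2⟩ := exists_seg τ (show i < n by omega)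
  refine ⟨ℓ, hℓ, h1, ?_⟩
  rcases Nat.lt_or_ge (i + 1) (τ.t (ℓ + 1)) with h' | h'
  · exact h'
  · exfalso
    have heq : τ.t (ℓ + 1) = i + 1 := by omega
    rcases Nat.lt_or_ge (ℓ + 1) τ.D with hD | hD
    · exact hnc (ℓ + 1) (by omega) hD heq
    · have : ℓ + 1 = τ.D := by omega
      rw [this, τ.hn] at heq; omega

lemma mu_succ_diff_le (hτs : IsTrueSeg τs μs) (hDs : 2 ≤ τs.D)
    {i : ℕ} (h1 : i < n) (h2 : i + 1 < n) :
    ‖μs ⟨i, h1⟩ - μs ⟨i + 1, h2⟩‖ ≤ deltaMax τs μs := by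
  obtain ⟨ℓ, hℓ, ha, hb⟩ := exists_seg τs h1
  rcases Nat.lt_or_ge (i + 1) (τs.t (ℓ + 1)) with h' | h'
  · have : μs ⟨i, h1⟩ = μs ⟨i + 1, h2⟩ :=
      hτs.1 ℓ hℓ _ ((mem_seg τs).mpr ⟨ha, hb⟩) _ ((mem_seg τs).mpr ⟨by simp; omega, h'⟩)
    rw [this, sub_self, norm_zero]
    exact deltaMax_nonneg τs μs
  · have heq : τs.t (ℓ + 1) = i + 1 := by omega
    have hℓ1 : ℓ + 1 < τs.D := by
      rcases Nat.lt_or_ge (ℓ + 1) τs.D with hD | hD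
      · exact hD
      · exfalso; have : ℓ + 1 = τs.D := by omega
        rw [this, τs.hn] at heq; omega
    have hj : jumpAt τs μs (ℓ + 1) = ‖μs ⟨i + 1, h2⟩ - μs ⟨i, h1⟩‖ := by
      unfold jumpAt
      rw [dif_pos (show 0 < τs.t (ℓ + 1) ∧ τs.t (ℓ + 1) < n by omega)]
      simp only [heq, Nat.add_sub_cancel]
    rw [norm_sub_rev, ← hj]
    exact jumpAt_le_deltaMax τs μs hDs (by omega) hℓ1

lemma tv_bound (τ' : Seg n) (g : ℕ → ℝ) (B : ℝ) (hB : 0 ≤ B)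
    (hzero : ∀ i, i < n - 1 → (∀ ℓ, 0 < ℓ → ℓ < τ'.D → τ'.t ℓ ≠ i + 1) → g i = 0)
    (hgB : ∀ i, i < n - 1 → g i ≤ B) :
    ∑ i ∈ Finset.range (n - 1), g i ≤ ((τ'.D : ℝ) - 1) * B := by
  classical
  set s := (Finset.Ioo 0 τ'.D).image (fun ℓ => τ'.t ℓ - 1) with hs
  have hsub : s ⊆ Finset.range (n - 1) := by
    intro x hx
    simp only [hs, Finset.mem_image, Finset.mem_Ioo] at hx
    obtain ⟨ℓ, ⟨hℓ0, hℓD⟩, rfl⟩ := hx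
    have h1 : 0 < τ'.t ℓ := t_pos τ' hℓ0 (le_of_lt hℓD)
    have h2 : τ'.t ℓ < n := t_lt_n τ' hℓD
    exact Finset.mem_range.mpr (by omega)
  have heq : ∑ i ∈ s, g i = ∑ i ∈ Finset.range (n - 1), g i := by
    apply Finset.sum_subset hsub
    intro x hx hxs
    apply hzero x (Finset.mem_range.mp hx)
    intro ℓ hℓ0 hℓD hteq
    apply hxs
    simp only [hs, Finset.mem_image, Finset.mem_Ioo]
    exact ⟨ℓ, ⟨hℓ0, hℓD⟩, by omega⟩
  rw [← heq]
  calc ∑ i ∈ s, g i ≤ s.card • B :=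
        Finset.sum_le_card_nsmul s g B (fun x hx => hgB x (Finset.mem_range.mp (hsub hx)))
    _ = (s.card : ℝ) * B := nsmul_eq_mul _ _
    _ ≤ ((τ'.D : ℝ) - 1) * B := by
        apply mul_le_mul_of_nonneg_right _ hB
        have h1 : s.card ≤ (Finset.Ioo 0 τ'.D).card := Finset.card_image_le
        rw [Nat.card_Ioo] at h1
        have hD1 : 1 ≤ τ'.D := τ'.hD
        have h2 : (s.card : ℝ) ≤ ((τ'.D - 1 : ℕ) : ℝ) := Nat.cast_le.mpr (by omega)
        have h3 : ((τ'.D - 1 : ℕ) : ℝ) = (τ'.D : ℝ) - 1 := by push_cast [hD1]; ring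
        linarith

lemma abel_inner (f S : ℕ → H) (m : ℕ) :
    ∑ i ∈ Finset.range m, (inner ℝ (f i) (S (i + 1) - S i) : ℝ)
      = ∑ i ∈ Finset.range m, (inner ℝ (f i - f (i + 1)) (S (i + 1)) : ℝ)
        + (inner ℝ (f m) (S m) : ℝ) - (inner ℝ (f 0) (S 0) : ℝ) := by
  induction m with
  | zero => simp
  | succ m ih =>
    rw [Finset.sum_range_succ, Finset.sum_range_succ, ih]
    simp only [inner_sub_left, inner_sub_right]
    ring

end Main

end SegAux

/-- Lemma 5.6: `|⟨μ* − Π_τ μ*, ε⟩| ≤ 6 D_{τ*} max{D_{τ*}, D_τ} Δ̄ M_n`. -/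
theorem linear_term_deterministic_bound {H : Type*}
    [NormedAddCommGroup H] [InnerProductSpace ℝ H]
    {n : ℕ} (μs : Fin n → H) (τs : Seg n) (hτs : IsTrueSeg τs μs) (hDs : 2 ≤ τs.D)
    (ε : Fin n → H) (τ : Seg n) :
    |hinner (fun i => μs i - Seg.proj τ μs i) ε|
      ≤ 6 * (τs.D : ℝ) * (max τs.D τ.D : ℕ) * deltaMax τs μs * Mmax ε := by
  classical
  have hΔ0 : 0 ≤ deltaMax τs μs := SegAux.deltaMax_nonneg τs μs
  have hn2 : 2 ≤ n := by
    have h2 : τs.t 2 ≤ n := by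
      have := SegAux.t_le_t τs hDs le_rfl; rw [τs.hn] at this; exact this
    have h01 := SegAux.t_lt_t τs (show (0 : ℕ) < 1 by norm_num) (by omega)
    have h12 := SegAux.t_lt_t τs (show (1 : ℕ) < 2 by norm_num) hDs
    have h0 := τs.h0
    omega
  set Δ : ℝ := deltaMax τs μs with hΔdef
  set K : ℝ := ((τs.D : ℝ) - 1) * Δ with hK
  have hc1 : (2 : ℝ) ≤ (τs.D : ℝ) := by exact_mod_cast hDs
  have hc2 : (1 : ℝ) ≤ (τ.D : ℝ) := by exact_mod_cast τ.hD
  have hK0 : 0 ≤ K := mul_nonneg (by linarith) hΔ0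
  set M : ℝ := Mmax ε with hM
  obtain ⟨S, hSdef⟩ : ∃ S : ℕ → H,
      S = fun k => ∑ j ∈ Finset.univ.filter (fun j : Fin n => (j : ℕ) < k), ε j := ⟨_, rfl⟩
  have hSM : ∀ k, k ≤ n → ‖S k‖ ≤ M := by
    intro k hk
    rw [hM, hSdef]
    unfold Mmax
    exact Finset.le_sup'
      (fun k => ‖∑ j ∈ Finset.univ.filter (fun j : Fin n => (j : ℕ) < k), ε j‖)
      (Finset.mem_range.mpr (show k < n + 1 by omega))
  have hM0 : 0 ≤ M := le_trans (norm_nonneg (S 0)) (hSM 0 (by omega))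
  have hstep : ∀ (i : ℕ) (h : i < n), S (i + 1) = S i + ε ⟨i, h⟩ := by
    intro i h
    have hset : Finset.univ.filter (fun j : Fin n => (j : ℕ) < i + 1)
        = insert (⟨i, h⟩ : Fin n) (Finset.univ.filter (fun j : Fin n => (j : ℕ) < i)) := by
      ext j
      simp only [Finset.mem_filter, Finset.mem_univ, true_and, Finset.mem_insert, Fin.ext_iff]
      omega
    simp only [hSdef, hset]
    rw [Finset.sum_insert (by simp)]
    abel
  have hS0 : S 0 = 0 := by
    simp [hSdef]
  obtain ⟨f, hfdef⟩ : ∃ f : ℕ → H,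
      f = fun i => if h : i < n then μs ⟨i, h⟩ - Seg.proj τ μs ⟨i, h⟩ else 0 := ⟨_, rfl⟩
  have hfn : f n = 0 := by simp [hfdef]
  have h1 : hinner (fun i => μs i - Seg.proj τ μs i) ε
      = ∑ i ∈ Finset.range n, (inner ℝ (f i) (S (i + 1) - S i) : ℝ) := by
    simp only [hinner]
    rw [← Fin.sum_univ_eq_sum_range (fun i => (inner ℝ (f i) (S (i + 1) - S i) : ℝ)) n]
    apply Finset.sum_congr rfl
    intro i _
    have hf : f (i : ℕ) = μs i - Seg.proj τ μs i := by
      simp only [hfdef]; rw [dif_pos i.isLt, Fin.eta]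
    have hs : S ((i : ℕ) + 1) - S (i : ℕ) = ε i := by
      rw [hstep i i.isLt]; simp
    rw [hf, hs]
  rw [h1, SegAux.abel_inner f S n, hfn, hS0, inner_zero_left, inner_zero_right,
    add_zero, sub_zero]
  have hbound : |∑ i ∈ Finset.range n, (inner ℝ (f i - f (i + 1)) (S (i + 1)) : ℝ)|
      ≤ (∑ i ∈ Finset.range n, ‖f i - f (i + 1)‖) * M := by
    refine le_trans (Finset.abs_sum_le_sum_abs _ _) ?_
    rw [Finset.sum_mul]
    refine Finset.sum_le_sum ?_
    intro i hi
    refine le_trans (abs_real_inner_le_norm _ _) ?_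
    exact mul_le_mul_of_nonneg_left
      (hSM (i + 1) (by have := Finset.mem_range.mp hi; omega)) (norm_nonneg _)
  -- bound the total variation sum
  obtain ⟨g1, hg1def⟩ : ∃ g1 : ℕ → ℝ,
      g1 = fun i => if h : i + 1 < n then ‖μs ⟨i, by omega⟩ - μs ⟨i + 1, h⟩‖ else 0 := ⟨_, rfl⟩
  obtain ⟨g2, hg2def⟩ : ∃ g2 : ℕ → ℝ,
      g2 = fun i => if h : i + 1 < n then
        ‖Seg.proj τ μs ⟨i, by omega⟩ - Seg.proj τ μs ⟨i + 1, h⟩‖ else 0 := ⟨_, rfl⟩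
  have hpt : ∀ i ∈ Finset.range (n - 1), ‖f i - f (i + 1)‖ ≤ g1 i + g2 i := by
    intro i hi
    have hi' : i + 1 < n := by have := Finset.mem_range.mp hi; omega
    have hin : i < n := by omega
    have e1 : f i = μs ⟨i, hin⟩ - Seg.proj τ μs ⟨i, hin⟩ := by
      simp only [hfdef]; rw [dif_pos hin]
    have e2 : f (i + 1) = μs ⟨i + 1, hi'⟩ - Seg.proj τ μs ⟨i + 1, hi'⟩ := by
      simp only [hfdef]; rw [dif_pos hi']
    have e3 : g1 i = ‖μs ⟨i, hin⟩ - μs ⟨i + 1, hi'⟩‖ := by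
      simp only [hg1def]; rw [dif_pos hi']
    have e4 : g2 i = ‖Seg.proj τ μs ⟨i, hin⟩ - Seg.proj τ μs ⟨i + 1, hi'⟩‖ := by
      simp only [hg2def]; rw [dif_pos hi']
    rw [e1, e2, e3, e4]
    have heq : (μs ⟨i, hin⟩ - Seg.proj τ μs ⟨i, hin⟩)
          - (μs ⟨i + 1, hi'⟩ - Seg.proj τ μs ⟨i + 1, hi'⟩)
        = (μs ⟨i, hin⟩ - μs ⟨i + 1, hi'⟩)
          - (Seg.proj τ μs ⟨i, hin⟩ - Seg.proj τ μs ⟨i + 1, hi'⟩) := by abel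
    rw [heq]
    exact norm_sub_le _ _
  have hg1 : ∑ i ∈ Finset.range (n - 1), g1 i ≤ ((τs.D : ℝ) - 1) * Δ := by
    apply SegAux.tv_bound τs g1 Δ hΔ0
    · intro i hi hnc
      obtain ⟨ℓ, hℓ, ha, hb⟩ := SegAux.succ_same_seg τs (by omega) hnc
      have hi' : i + 1 < n := by omega
      have hin : i < n := by omega
      simp only [hg1def]; rw [dif_pos hi']
      rw [hτs.1 ℓ hℓ ⟨i, hin⟩
          ((SegAux.mem_seg τs).mpr ⟨ha, show i < τs.t (ℓ + 1) by omega⟩)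
        ⟨i + 1, hi'⟩
          ((SegAux.mem_seg τs).mpr ⟨show τs.t ℓ ≤ i + 1 by omega, hb⟩),
        sub_self, norm_zero]
    · intro i hi
      have hi' : i + 1 < n := by omega
      simp only [hg1def]; rw [dif_pos hi']
      exact SegAux.mu_succ_diff_le μs τs hτs hDs (by omega) hi'
  have hg2 : ∑ i ∈ Finset.range (n - 1), g2 i ≤ ((τ.D : ℝ) - 1) * (2 * K + Δ) := by
    apply SegAux.tv_bound τ g2 (2 * K + Δ) (by linarith)
    · intro i hi hnc
      obtain ⟨ℓ, hℓ, ha, hb⟩ := SegAux.succ_same_seg τ (by omega) hnc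
      have hi' : i + 1 < n := by omega
      have hin : i < n := by omega
      simp only [hg2def]; rw [dif_pos hi']
      rw [SegAux.proj_eq τ μs hℓ (i := ⟨i, hin⟩) ha (show i < τ.t (ℓ + 1) by omega),
        SegAux.proj_eq τ μs hℓ (i := ⟨i + 1, hi'⟩) (show τ.t ℓ ≤ i + 1 by omega) hb,
        sub_self, norm_zero]
    · intro i hi
      have hi' : i + 1 < n := by omega
      have hin : i < n := by omega
      simp only [hg2def]; rw [dif_pos hi']
      have t1 : ‖Seg.proj τ μs ⟨i, hin⟩ - μs ⟨i, hin⟩‖ ≤ K :=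
        SegAux.proj_sub_bound μs τs hτs hDs τ _
      have t2 : ‖μs ⟨i, hin⟩ - μs ⟨i + 1, hi'⟩‖ ≤ Δ :=
        SegAux.mu_succ_diff_le μs τs hτs hDs hin hi'
      have t3 : ‖μs ⟨i + 1, hi'⟩ - Seg.proj τ μs ⟨i + 1, hi'⟩‖ ≤ K := by
        rw [norm_sub_rev]
        exact SegAux.proj_sub_bound μs τs hτs hDs τ _
      calc ‖Seg.proj τ μs ⟨i, hin⟩ - Seg.proj τ μs ⟨i + 1, hi'⟩‖
          ≤ ‖Seg.proj τ μs ⟨i, hin⟩ - μs ⟨i, hin⟩‖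
            + ‖μs ⟨i, hin⟩ - Seg.proj τ μs ⟨i + 1, hi'⟩‖ :=
            norm_sub_le_norm_sub_add_norm_sub _ _ _
        _ ≤ ‖Seg.proj τ μs ⟨i, hin⟩ - μs ⟨i, hin⟩‖
            + (‖μs ⟨i, hin⟩ - μs ⟨i + 1, hi'⟩‖
              + ‖μs ⟨i + 1, hi'⟩ - Seg.proj τ μs ⟨i + 1, hi'⟩‖) := by
            gcongr
            exact norm_sub_le_norm_sub_add_norm_sub _ _ _
        _ ≤ 2 * K + Δ := by linarith
  have hlast : ‖f (n - 1) - f (n - 1 + 1)‖ ≤ K := by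
    have hfin : f (n - 1 + 1) = 0 := by rw [show n - 1 + 1 = n by omega]; exact hfn
    have hin : n - 1 < n := by omega
    have e1 : f (n - 1) = μs ⟨n - 1, hin⟩ - Seg.proj τ μs ⟨n - 1, hin⟩ := by
      simp only [hfdef]; rw [dif_pos hin]
    rw [hfin, sub_zero, e1, norm_sub_rev]
    exact SegAux.proj_sub_bound μs τs hτs hDs τ _
  have hsum : ∑ i ∈ Finset.range n, ‖f i - f (i + 1)‖
      ≤ K + ((τ.D : ℝ) - 1) * (2 * K + Δ) + K := by
    have hsplit : ∑ i ∈ Finset.range n, ‖f i - f (i + 1)‖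
        = ∑ i ∈ Finset.range (n - 1), ‖f i - f (i + 1)‖ + ‖f (n - 1) - f (n - 1 + 1)‖ := by
      conv_lhs => rw [show n = (n - 1) + 1 by omega]
      rw [Finset.sum_range_succ]
    rw [hsplit]
    have hmid : ∑ i ∈ Finset.range (n - 1), ‖f i - f (i + 1)‖
        ≤ ∑ i ∈ Finset.range (n - 1), g1 i + ∑ i ∈ Finset.range (n - 1), g2 i := by
      rw [← Finset.sum_add_distrib]
      exact Finset.sum_le_sum hpt
    have : ((τs.D : ℝ) - 1) * Δ = K := hK.symm
    linarith
  have hc3 : (τs.D : ℝ) ≤ ((max τs.D τ.D : ℕ) : ℝ) := by exact_mod_cast le_max_left _ _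
  have hc4 : (τ.D : ℝ) ≤ ((max τs.D τ.D : ℕ) : ℝ) := by exact_mod_cast le_max_right _ _
  have hcoeff : K + ((τ.D : ℝ) - 1) * (2 * K + Δ) + K
      ≤ 6 * (τs.D : ℝ) * ((max τs.D τ.D : ℕ) : ℝ) * Δ := by
    rw [hK]
    nlinarith [mul_nonneg (mul_nonneg (show (0 : ℝ) ≤ (τs.D : ℝ) by linarith)
        (sub_nonneg.mpr hc4)) hΔ0,
      mul_nonneg (mul_nonneg (show (0 : ℝ) ≤ (τs.D : ℝ) by linarith)
        (show (0 : ℝ) ≤ ((max τs.D τ.D : ℕ) : ℝ) by linarith)) hΔ0,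
      mul_nonneg (show (0 : ℝ) ≤ (τ.D : ℝ) + 1 by linarith) hΔ0]
  calc |∑ i ∈ Finset.range n, (inner ℝ (f i - f (i + 1)) (S (i + 1)) : ℝ)|
      ≤ (∑ i ∈ Finset.range n, ‖f i - f (i + 1)‖) * M := hbound
    _ ≤ (K + ((τ.D : ℝ) - 1) * (2 * K + Δ) + K) * M :=
        mul_le_mul_of_nonneg_right hsum hM0
    _ ≤ 6 * (τs.D : ℝ) * ((max τs.D τ.D : ℕ) : ℝ) * Δ * M :=
        mul_le_mul_of_nonneg_right hcoeff hM0
end
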